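/- Let g1 be an element of Thompson's group V with N(g1) ≥ 4 such that the word 0 is a strict prefix of the range code of some branch of g1. Write the reduced representation of g1 with domain codes u_1 < u_2 < … < u_n and range codes t_1 < t_2 < … < t_n (both in lexicographic order), and let k be the index such that u_1 → t_k is a branch of g1. Let h be the element of Thompson's group T with the branches t_k → u_1, t_{k+1} → u_2, …, t_{k−1} → u_n (indices of t taken cyclically modulo n). Let M be a positive integer, let m = 1 + M·N(g1), let g2 = g1·x_m and g3 = g2·h. Then: (1) for every constant C ≥ 1 such that |t|_B ≤ C·N(t) for all t ∈ T, one has |h|_B ≤ C·N(g1); (2) N(g3) ≥ (M−1)·N(g1); (3) ℓ0(g3) ≤ N(g1) and 0^{ℓ0(g3)} → 0^{ℓ0(g3)} is a branch of g3. -/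

import Mathlib

/-!
Formalization framework for Thompson's groups `F ≤ T ≤ V` acting on the
Cantor set `{0,1}^ℕ`.  Elements of `V` are permutations of the Cantor set
admitting a finite table of branches `u → v` (complete prefix codes) with
`g(uω) = vω`.  Products in the paper are composed left-to-right, i.e. the
paper's `g·h` is `Equiv.trans g h` (equivalently `h * g` in `Equiv.Perm`).
-/

abbrev CSeq : Type := ℕ → Bool
abbrev VPerm : Type := Equiv.Perm CSeq

/-- Concatenation of a finite binary word with an infinite binary word. -/
def app (u : List Bool) (ω : CSeq) : CSeq := fun n =>
  if h : n < u.length then u[n] else ω (n - u.length)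

/-- The finite word `u` is a prefix of the infinite word `ω`. -/
def IsPref (u : List Bool) (ω : CSeq) : Prop := ∃ ω', ω = app u ω'

/-- The finite table of branches `T` represents the permutation `g` of the
Cantor set: the domain codes and the range codes each form a complete prefix
code, and `g` maps `uω ↦ vω` for every branch `(u, v) ∈ T`. -/
def Represents (g : VPerm) (T : Finset (List Bool × List Bool)) : Prop :=
  (∀ ω : CSeq, ∃! p : List Bool × List Bool, p ∈ T ∧ IsPref p.1 ω) ∧
  (∀ ω : CSeq, ∃! p : List Bool × List Bool, p ∈ T ∧ IsPref p.2 ω) ∧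
  (∀ p ∈ T, ∀ ω : CSeq, g (app p.1 ω) = app p.2 ω)

/-- A table of branches is reduced if it contains no pair of branches
`u0 → v0`, `u1 → v1`. -/
def Reduced (T : Finset (List Bool × List Bool)) : Prop :=
  ∀ u v : List Bool,
    ¬((u ++ [false], v ++ [false]) ∈ T ∧ (u ++ [true], v ++ [true]) ∈ T)

/-- Membership in Thompson's group `V`. -/
def InV (g : VPerm) : Prop := ∃ T, Represents g T

/-- `u → v` is a branch of the (unique) reduced representation of `g`. -/
def IsBranch (g : VPerm) (u v : List Bool) : Prop :=
  ∃ T, Represents g T ∧ Reduced T ∧ (u, v) ∈ T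

/-- `N(g)`: the number of branches of the reduced representation of `g`. -/
noncomputable def Nbr (g : VPerm) : ℕ :=
  sInf {n | ∃ T, Represents g T ∧ Reduced T ∧ T.card = n}

/-- `ℓ0(g)`: the unique `ℓ ≥ 1` such that `0^ℓ` is the range code of some
branch of `g`. -/
noncomputable def ell0 (g : VPerm) : ℕ :=
  sInf {ℓ | 1 ≤ ℓ ∧ ∃ u, IsBranch g u (List.replicate ℓ false)}

/-- `ℓ1(g)`: the unique `ℓ ≥ 1` such that `1^ℓ` is the range code of some
branch of `g`. -/
noncomputable def ell1 (g : VPerm) : ℕ :=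
  sInf {ℓ | 1 ≤ ℓ ∧ ∃ u, IsBranch g u (List.replicate ℓ true)}

/-- `w` is a strict prefix of the range code of some branch of `g`. -/
def StrictPrefOfBranch (g : VPerm) (w : List Bool) : Prop :=
  ∃ u v, IsBranch g u v ∧ w <+: v ∧ w ≠ v

/-- Strict lexicographic order on infinite binary words. -/
def lexLt (a b : CSeq) : Prop :=
  ∃ n, (∀ i < n, a i = b i) ∧ a n = false ∧ b n = true

/-- Membership in Thompson's group `F`: an element of `V` preserving the
(lexicographic) order of the Cantor set. -/
def InF (g : VPerm) : Prop :=
  InV g ∧ ∀ a b : CSeq, lexLt a b → lexLt (g a) (g b)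

/-- `(a, b, c)` is a (strict) cyclically ordered triple. -/
def cyc3 (a b c : CSeq) : Prop :=
  (lexLt a b ∧ lexLt b c) ∨ (lexLt b c ∧ lexLt c a) ∨ (lexLt c a ∧ lexLt a b)

/-- Membership in Thompson's group `T`: an element of `V` preserving the
cyclic order of the Cantor set. -/
def InT (g : VPerm) : Prop :=
  InV g ∧ ∀ a b c : CSeq, cyc3 a b c → cyc3 (g a) (g b) (g c)

/-- Word length of `g` with respect to the generating set `S` (letters are
elements of `S` or inverses of elements of `S`). -/
noncomputable def wlen (S : Set VPerm) (g : VPerm) : ℕ :=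
  sInf {n | ∃ l : List VPerm,
    l.length = n ∧ (∀ x ∈ l, x ∈ S ∨ x⁻¹ ∈ S) ∧ l.prod = g}

/-- `h'` is the copy `h_{[u]}` of `h` supported on the cylinder of `u`. -/
def IsCopy (h : VPerm) (u : List Bool) (h' : VPerm) : Prop :=
  (∀ ω : CSeq, h' (app u ω) = app u (h ω)) ∧
  (∀ ω : CSeq, ¬ IsPref u ω → h' ω = ω)

/-- Evaluation (left-to-right) of the word `w` starting at the element `g`:
the paper's product `g · w`. -/
def wordEval (g : VPerm) (w : List VPerm) : VPerm :=
  w.foldl (fun a b => a.trans b) g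

/-- Branches of the generator `x0`: `00→0`, `01→10`, `1→11`. -/
def x0T : Finset (List Bool × List Bool) :=
  {([false, false], [false]), ([false, true], [true, false]),
   ([true], [true, true])}

/-- Branches of the generator `x1`: `0→0`, `100→10`, `101→110`, `11→111`. -/
def x1T : Finset (List Bool × List Bool) :=
  {([false], [false]), ([true, false, false], [true, false]),
   ([true, false, true], [true, true, false]),
   ([true, true], [true, true, true])}

/-- Branches of the generator `c1`: `0→10`, `10→11`, `11→0`. -/
def c1T : Finset (List Bool × List Bool) :=
  {([false], [true, false]), ([true, false], [true, true]),
   ([true, true], [false])}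

/-- Branches of the generator `π0`: `0→10`, `10→0`, `11→11`. -/
def pi0T : Finset (List Bool × List Bool) :=
  {([false], [true, false]), ([true, false], [false]),
   ([true, true], [true, true])}

/-- The standard generators `x_j`, `j ≥ 0`, of `F`: for `r ≥ 1`,
`x_{r+1} = x0^{-r} · x1 · x0^{r}` in the left-to-right convention of the
paper, i.e. `x0 ^ r * x1 * (x0⁻¹) ^ r` in `Equiv.Perm`. -/
def xseq (x0 x1 : VPerm) : ℕ → VPerm
  | 0 => x0
  | r + 1 => x0 ^ r * x1 * (x0⁻¹) ^ r

section Toolkit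

lemma app_apply_lt (u : List Bool) (ω : CSeq) {n : ℕ} (h : n < u.length) :
    app u ω n = u[n] := dif_pos h

lemma app_apply_ge (u : List Bool) (ω : CSeq) {n : ℕ} (h : u.length ≤ n) :
    app u ω n = ω (n - u.length) := dif_neg (by omega)

lemma app_append (u v : List Bool) (ω : CSeq) :
    app (u ++ v) ω = app u (app v ω) := by
  funext n
  by_cases h1 : n < u.length
  · rw [app_apply_lt _ _ (by simp only [List.length_append]; omega), app_apply_lt _ _ h1,
      List.getElem_append_left h1]
  · push_neg at h1
    rw [app_apply_ge _ _ h1]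
    by_cases h2 : n < u.length + v.length
    · rw [app_apply_lt _ _ (by simp only [List.length_append]; omega),
        app_apply_lt _ _ (by omega), List.getElem_append_right (by omega)]
    · rw [app_apply_ge _ _ (by simp only [List.length_append]; omega),
        app_apply_ge _ _ (by omega)]
      simp only [List.length_append]
      congr 1
      omega

lemma app_inj (u : List Bool) : Function.Injective (app u) := by
  intro a b hab
  funext n
  have := congrFun hab (n + u.length)
  rwa [app_apply_ge _ _ (by omega), app_apply_ge _ _ (by omega),
    Nat.add_sub_cancel] at this

lemma isPref_iff {u : List Bool} {ω : CSeq} :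
    IsPref u ω ↔ ∀ i, (h : i < u.length) → ω i = u[i] := by
  constructor
  · rintro ⟨ω', rfl⟩ i h
    exact app_apply_lt _ _ h
  · intro h
    refine ⟨fun n => ω (n + u.length), ?_⟩
    funext n
    by_cases hn : n < u.length
    · rw [app_apply_lt _ _ hn]; exact h n hn
    · rw [app_apply_ge _ _ (by omega)]
      congr 1
      omega

lemma isPref_app_self (u : List Bool) (ω : CSeq) : IsPref u (app u ω) := ⟨ω, rfl⟩

lemma isPref_replicate {b : Bool} {j : ℕ} {ω : CSeq} :
    IsPref (List.replicate j b) ω ↔ ∀ i < j, ω i = b := by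
  rw [isPref_iff]
  simp

lemma prefix_of_isPref_isPref {u v : List Bool} {ω : CSeq}
    (hu : IsPref u ω) (hv : IsPref v ω) (hl : u.length ≤ v.length) : u <+: v := by
  rw [isPref_iff] at hu hv
  rw [List.prefix_iff_eq_take]
  apply List.ext_getElem (by simp [hl])
  intro i h1 h2
  rw [List.getElem_take]
  rw [← hu i (by omega), hv i (by omega)]

lemma isPref_comparable {u v : List Bool} {ω : CSeq}
    (hu : IsPref u ω) (hv : IsPref v ω) : u <+: v ∨ v <+: u := by
  rcases le_total u.length v.length with h | h
  · exact Or.inl (prefix_of_isPref_isPref hu hv h)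
  · exact Or.inr (prefix_of_isPref_isPref hv hu h)

lemma isPref_of_prefix {u v : List Bool} {ω : CSeq}
    (h : u <+: v) (hv : IsPref v ω) : IsPref u ω := by
  obtain ⟨s, rfl⟩ := h
  obtain ⟨ω', rfl⟩ := hv
  exact ⟨app s ω', by rw [app_append]⟩

lemma isPref_append_iff {u s : List Bool} {τ : CSeq} :
    IsPref (u ++ s) (app u τ) ↔ IsPref s τ := by
  constructor
  · rintro ⟨ω', h⟩
    rw [app_append] at h
    exact ⟨ω', app_inj u h⟩
  · rintro ⟨ω', rfl⟩
    exact ⟨ω', by rw [app_append]⟩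

lemma app_word_len_le {u v : List Bool} (h : ∀ ω, app u ω = app v ω) :
    u.length ≤ v.length := by
  by_contra hlt
  push_neg at hlt
  have := congrFun (h (fun _ => !u[v.length]'(by omega))) v.length
  rw [app_apply_lt _ _ (by omega), app_apply_ge _ _ le_rfl] at this
  simp at this

lemma app_word_inj {u v : List Bool} (h : ∀ ω, app u ω = app v ω) : u = v := by
  have hl : u.length = v.length :=
    le_antisymm (app_word_len_le h) (app_word_len_le (fun ω => (h ω).symm))
  apply List.ext_getElem hl
  intro i h1 h2
  have := congrFun (h (fun _ => false)) i
  rwa [app_apply_lt _ _ h1, app_apply_lt _ _ h2] at this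

end Toolkit
section RepLemmas

lemma dom_unique {g : VPerm} {T : Finset (List Bool × List Bool)}
    (hT : Represents g T) {p q : List Bool × List Bool} (hp : p ∈ T) (hq : q ∈ T)
    {ω : CSeq} (h1 : IsPref p.1 ω) (h2 : IsPref q.1 ω) : p = q := by
  obtain ⟨x, -, hu⟩ := hT.1 ω
  exact (hu p ⟨hp, h1⟩).trans (hu q ⟨hq, h2⟩).symm

lemma rng_unique {g : VPerm} {T : Finset (List Bool × List Bool)}
    (hT : Represents g T) {p q : List Bool × List Bool} (hp : p ∈ T) (hq : q ∈ T)
    {ω : CSeq} (h1 : IsPref p.2 ω) (h2 : IsPref q.2 ω) : p = q := by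
  obtain ⟨x, -, hu⟩ := hT.2.1 ω
  exact (hu p ⟨hp, h1⟩).trans (hu q ⟨hq, h2⟩).symm

lemma dom_prefix_eq {g : VPerm} {T : Finset (List Bool × List Bool)}
    (hT : Represents g T) {p q : List Bool × List Bool} (hp : p ∈ T) (hq : q ∈ T)
    (h : p.1 <+: q.1) : p = q :=
  dom_unique hT hp hq (isPref_of_prefix h (isPref_app_self _ (fun _ => false)))
    (isPref_app_self _ _)

lemma rng_prefix_eq {g : VPerm} {T : Finset (List Bool × List Bool)}
    (hT : Represents g T) {p q : List Bool × List Bool} (hp : p ∈ T) (hq : q ∈ T)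
    (h : p.2 <+: q.2) : p = q :=
  rng_unique hT hp hq (isPref_of_prefix h (isPref_app_self _ (fun _ => false)))
    (isPref_app_self _ _)

/-- Lemma A: transfer of branches along refinement. -/
lemma branch_transfer {g : VPerm} {T T' : Finset (List Bool × List Bool)}
    (hT : Represents g T) (hT' : Represents g T') {u v u' v' w : List Bool}
    (hp : (u, v) ∈ T) (hq : (u', v') ∈ T') (hw : u' = u ++ w) : v' = v ++ w := by
  apply app_word_inj
  intro ω
  have h1 := hT'.2.2 _ hq ω
  have h2 := hT.2.2 _ hp (app w ω)
  simp only [hw, app_append] at h1 h2 ⊢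
  rw [← h1, h2]

/-- A finite complete prefix code other than `{[]}` contains two sibling words. -/
lemma code_sibling {C : Finset (List Bool)}
    (hC : ∀ τ : CSeq, ∃! c, c ∈ C ∧ IsPref c τ) (hne : C ≠ {[]}) :
    ∃ r, r ++ [false] ∈ C ∧ r ++ [true] ∈ C := by
  have hCne : C.Nonempty := by
    obtain ⟨c, hc, -⟩ := hC (fun _ => false)
    exact ⟨c, hc.1⟩
  obtain ⟨c0, hc0, hmax⟩ := C.exists_max_image (fun c => c.length) hCne
  have hc0ne : c0 ≠ [] := by
    rintro rfl
    apply hne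
    apply Finset.eq_singleton_iff_unique_mem.mpr
    refine ⟨hc0, fun x hx => ?_⟩
    have := hmax x hx
    simpa using List.length_eq_zero_iff.mp (by simpa using this)
  obtain ⟨r, bb, hc0eq⟩ : ∃ r bb, c0 = r ++ [bb] :=
    ⟨c0.dropLast, c0.getLast hc0ne, (List.dropLast_append_getLast hc0ne).symm⟩
  obtain ⟨c1, ⟨hc1, hc1p⟩, -⟩ := hC (app (r ++ [!bb]) (fun _ => false))
  have hlen : c1.length ≤ r.length + 1 := by
    have := hmax c1 hc1
    rw [hc0eq] at this
    simpa using this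
  have hcomp : c1 <+: r ++ [!bb] :=
    prefix_of_isPref_isPref hc1p (isPref_app_self _ _) (by simpa using hlen)
  rcases eq_or_lt_of_le hlen with heq | hlt
  · have : c1 = r ++ [!bb] := List.IsPrefix.eq_of_length hcomp (by simpa using heq)
    subst this
    cases bb with
    | false => exact ⟨r, by rw [← hc0eq]; exact hc0, by simpa using hc1⟩
    | true => exact ⟨r, by simpa using hc1, by rw [← hc0eq]; exact hc0⟩
  · exfalso
    have hc1r : c1 <+: r := by
      have : c1 <+: (r ++ [!bb]).take r.length :=
        List.prefix_take_iff.mpr ⟨hcomp, by omega⟩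
      simpa [List.take_append_of_le_length le_rfl] using this
    have hc1c0 : c1 <+: c0 := hc1r.trans (hc0eq ▸ (r.prefix_append [bb]))
    have : c1 = c0 := by
      have h1 : IsPref c1 (app c0 (fun _ => false)) :=
        isPref_of_prefix hc1c0 (isPref_app_self _ _)
      obtain ⟨x, -, hu⟩ := hC (app c0 (fun _ => false))
      exact (hu c1 ⟨hc1, h1⟩).trans (hu c0 ⟨hc0, isPref_app_self _ _⟩).symm
    rw [this, hc0eq] at hlt
    simp at hlt

/-- Refinement: every branch of any representation refines a branch of a
reduced representation. -/
lemma refine_branch {g : VPerm} {T T' : Finset (List Bool × List Bool)}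
    (hT : Represents g T) (hred : Reduced T) (hT' : Represents g T')
    {a b : List Bool} (hab : (a, b) ∈ T') :
    ∃ u v s, (u, v) ∈ T ∧ a = u ++ s ∧ b = v ++ s := by
  by_cases hshort : ∃ u v s, (u, v) ∈ T ∧ a = u ++ s
  · obtain ⟨u, v, s, huv, rfl⟩ := hshort
    exact ⟨u, v, s, huv, rfl, branch_transfer hT hT' huv hab rfl⟩
  exfalso
  push_neg at hshort
  -- every branch of T meeting the cylinder of a strictly extends a
  have hext : ∀ p ∈ T, ∀ τ : CSeq, IsPref p.1 (app a τ) →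
      ∃ s, p.1 = a ++ s ∧ p.2 = b ++ s ∧ IsPref s τ := by
    intro p hp τ hpref
    rcases isPref_comparable hpref (isPref_app_self a τ) with hc | hc
    · obtain ⟨s, hs⟩ := hc
      exact absurd hs.symm (hshort p.1 p.2 s (by simpa using hp))
    · obtain ⟨s, hs⟩ := hc
      refine ⟨s, hs.symm, branch_transfer hT' hT hab (by simpa using hp) hs.symm, ?_⟩
      rw [← hs] at hpref
      exact isPref_append_iff.mp hpref
  set C : Finset (List Bool) :=
    (T.filter (fun p => a <+: p.1)).image (fun p => p.1.drop a.length) with hCdef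
  have hCmem : ∀ s ∈ C, (a ++ s, b ++ s) ∈ T := by
    intro s hs
    rw [hCdef] at hs
    obtain ⟨p, hp, hdrop⟩ := Finset.mem_image.mp hs
    have hp' := Finset.mem_filter.mp hp
    obtain ⟨s', heq⟩ := hp'.2
    have hss' : s = s' := by rw [← hdrop, ← heq]; simp
    obtain ⟨s2, h1, h2, -⟩ := hext p hp'.1 (app s' (fun _ => false))
      (by rw [← app_append, heq]; exact isPref_app_self _ _)
    have hs2 : s' = s2 := List.append_cancel_left (heq.trans h1)
    rw [hss', hs2, ← h1, ← h2]
    simpa using hp'.1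
  have hCcode : ∀ τ : CSeq, ∃! s, s ∈ C ∧ IsPref s τ := by
    intro τ
    obtain ⟨p, ⟨hp, hpref⟩, -⟩ := hT.1 (app a τ)
    obtain ⟨s, h1, h2, h3⟩ := hext p hp τ hpref
    refine ⟨s, ⟨?_, h3⟩, ?_⟩
    · rw [hCdef]
      apply Finset.mem_image.mpr
      exact ⟨p, Finset.mem_filter.mpr ⟨hp, ⟨s, h1.symm⟩⟩, by rw [h1]; simp⟩
    · rintro s' ⟨hs', hs'p⟩
      have h4 := hCmem s' hs'
      have h5 : IsPref (a ++ s') (app a τ) := isPref_append_iff.mpr hs'p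
      have := dom_unique hT h4 hp (by simpa using h5) hpref
      have : a ++ s' = p.1 := congrArg Prod.fst this
      rw [h1] at this
      exact List.append_cancel_left this
  by_cases hC1 : C = {[]}
  · have : (a ++ [], b ++ []) ∈ T := hCmem [] (by rw [hC1]; simp)
    simp only [List.append_nil] at this
    exact hshort a b [] this (by simp)
  · obtain ⟨r, hr0, hr1⟩ := code_sibling hCcode hC1
    have h0 := hCmem _ hr0
    have h1 := hCmem _ hr1
    rw [← List.append_assoc, ← List.append_assoc] at h0 h1
    exact hred (a ++ r) (b ++ r) ⟨h0, h1⟩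

/-- Uniqueness of the reduced representation. -/
lemma reduced_rep_unique {g : VPerm} {T T' : Finset (List Bool × List Bool)}
    (hT : Represents g T) (hr : Reduced T) (hT' : Represents g T') (hr' : Reduced T') :
    T = T' := by
  have key : ∀ (S S' : Finset (List Bool × List Bool)), Represents g S → Reduced S →
      Represents g S' → Reduced S' → S' ⊆ S := by
    intro S S' hS hrS hS' hrS' p hp
    have hp' : (p.1, p.2) ∈ S' := by simpa using hp
    obtain ⟨u, v, s, huv, he1, he2⟩ := refine_branch hS hrS hS' hp'
    obtain ⟨a', b', s', ha'b', he1', he2'⟩ := refine_branch hS' hrS' hS huv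
    have hpref : a' <+: p.1 := ⟨s' ++ s, by rw [he1, he1', List.append_assoc]⟩
    have := dom_prefix_eq hS' ha'b' hp' hpref
    have hfst : a' = p.1 := congrArg Prod.fst this
    have hlen := congrArg List.length hfst
    rw [he1, he1'] at hlen
    simp only [List.length_append] at hlen
    have hs'0 : s' = [] := List.length_eq_zero_iff.mp (by omega)
    have hs0 : s = [] := List.length_eq_zero_iff.mp (by omega)
    subst hs'0; subst hs0
    simp only [List.append_nil] at he1 he2
    rw [← he1, ← he2] at huv
    simpa using huv
  exact Finset.Subset.antisymm (key T' T hT' hr' hT hr) (key T T' hT hr hT' hr')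

end RepLemmas
section Reduction

lemma cseq_head (ω : CSeq) : ω = app [ω 0] (fun n => ω (n + 1)) := by
  funext n
  cases n with
  | zero => rw [app_apply_lt _ _ (by simp)]; rfl
  | succ n => rw [app_apply_ge _ _ (by simp)]; rfl

lemma isPref_snoc_of_isPref {u : List Bool} {ω : CSeq} (h : IsPref u ω) :
    ∃ b, IsPref (u ++ [b]) ω := by
  obtain ⟨τ, rfl⟩ := h
  exact ⟨τ 0, fun n => τ (n + 1), by rw [app_append, ← cseq_head]⟩

/-- Every representation can be reduced without increasing the number of
branches. -/
lemma exists_reduced_rep {g : VPerm} {T : Finset (List Bool × List Bool)}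
    (hT : Represents g T) :
    ∃ T', Represents g T' ∧ Reduced T' ∧ T'.card ≤ T.card := by
  generalize hN : T.card = N at *
  induction N using Nat.strong_induction_on generalizing T with
  | _ N ih =>
  by_cases hr : Reduced T
  · exact ⟨T, hT, hr, le_of_eq hN⟩
  simp only [Reduced, not_forall, not_not] at hr
  obtain ⟨u, v, h0, h1⟩ := hr
  have hne : (u ++ [false], v ++ [false]) ≠ (u ++ [true], v ++ [true]) := by
    intro hcontra
    have := congrArg Prod.fst hcontra
    simpa using this
  have huvnot : (u, v) ∉ T := by
    intro hmem
    have := dom_prefix_eq hT hmem h0 (by exact ⟨[false], rfl⟩)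
    have := congrArg (fun q => q.1.length) this
    simp at this
  set T2 : Finset (List Bool × List Bool) :=
    insert (u, v) ((T.erase (u ++ [false], v ++ [false])).erase
      (u ++ [true], v ++ [true])) with hT2
  have hmemT2 : ∀ p, p ∈ T2 ↔ p = (u, v) ∨
      (p ∈ T ∧ p ≠ (u ++ [false], v ++ [false]) ∧ p ≠ (u ++ [true], v ++ [true])) := by
    intro p
    rw [hT2]
    simp only [Finset.mem_insert, Finset.mem_erase]
    tauto
  have hcover : ∀ ω : CSeq, IsPref u ω →
      ∃ b, IsPref (u ++ [b]) ω ∧ IsPref (v ++ [b]) (g ω) := by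
    intro ω hpre
    obtain ⟨τ, rfl⟩ := hpre
    have hmemb : (u ++ [τ 0], v ++ [τ 0]) ∈ T := by cases τ 0 <;> [exact h0; exact h1]
    refine ⟨τ 0, ⟨fun n => τ (n + 1), by rw [app_append, ← cseq_head]⟩, ?_⟩
    have hev := hT.2.2 _ hmemb (fun n => τ (n + 1))
    simp only [app_append] at hev
    rw [← cseq_head] at hev
    rw [hev]
    exact ⟨fun n => τ (n + 1), by rw [app_append, ← cseq_head]⟩
  have heval2 : ∀ p ∈ T2, ∀ ω : CSeq, g (app p.1 ω) = app p.2 ω := by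
    intro p hp ω
    rcases (hmemT2 p).mp hp with rfl | ⟨hpT, -, -⟩
    · have hmemb : (u ++ [ω 0], v ++ [ω 0]) ∈ T := by cases ω 0 <;> [exact h0; exact h1]
      have hev := hT.2.2 _ hmemb (fun n => ω (n + 1))
      simp only [app_append] at hev
      rw [← cseq_head] at hev
      simpa using hev
    · exact hT.2.2 p hpT ω
  have hdom2 : ∀ ω : CSeq, ∃! p, p ∈ T2 ∧ IsPref p.1 ω := by
    intro ω
    obtain ⟨p, ⟨hp, hppref⟩, hpu⟩ := hT.1 ω
    by_cases hcase : p = (u ++ [false], v ++ [false]) ∨ p = (u ++ [true], v ++ [true])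
    · have hupref : IsPref u ω := by
        rcases hcase with rfl | rfl <;>
          exact isPref_of_prefix ⟨[_], rfl⟩ hppref
      refine ⟨(u, v), ⟨(hmemT2 _).mpr (Or.inl rfl), hupref⟩, ?_⟩
      rintro q ⟨hq, hqpref⟩
      rcases (hmemT2 q).mp hq with rfl | ⟨hqT, hq0, hq1⟩
      · rfl
      · exfalso
        have := hpu q ⟨hqT, hqpref⟩
        subst this
        rcases hcase with h | h <;> [exact hq0 h; exact hq1 h]
    · push_neg at hcase
      refine ⟨p, ⟨(hmemT2 _).mpr (Or.inr ⟨hp, hcase.1, hcase.2⟩), hppref⟩, ?_⟩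
      rintro q ⟨hq, hqpref⟩
      rcases (hmemT2 q).mp hq with rfl | ⟨hqT, hq0, hq1⟩
      · exfalso
        obtain ⟨b, hb1, -⟩ := hcover ω hqpref
        have hmemb : (u ++ [b], v ++ [b]) ∈ T := by cases b <;> [exact h0; exact h1]
        have heq1 := hpu (u ++ [b], v ++ [b]) ⟨hmemb, hb1⟩
        cases b
        · exact hcase.1 heq1.symm
        · exact hcase.2 heq1.symm
      · exact hpu q ⟨hqT, hqpref⟩
  have hrng2 : ∀ ω : CSeq, ∃! p, p ∈ T2 ∧ IsPref p.2 ω := by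
    intro ω
    obtain ⟨p, ⟨hp, hppref⟩, hpu⟩ := hT.2.1 ω
    by_cases hcase : p = (u ++ [false], v ++ [false]) ∨ p = (u ++ [true], v ++ [true])
    · have hupref : IsPref v ω := by
        rcases hcase with rfl | rfl <;>
          exact isPref_of_prefix ⟨[_], rfl⟩ hppref
      refine ⟨(u, v), ⟨(hmemT2 _).mpr (Or.inl rfl), hupref⟩, ?_⟩
      rintro q ⟨hq, hqpref⟩
      rcases (hmemT2 q).mp hq with rfl | ⟨hqT, hq0, hq1⟩
      · rfl
      · exfalso
        have := hpu q ⟨hqT, hqpref⟩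
        subst this
        rcases hcase with h | h <;> [exact hq0 h; exact hq1 h]
    · push_neg at hcase
      refine ⟨p, ⟨(hmemT2 _).mpr (Or.inr ⟨hp, hcase.1, hcase.2⟩), hppref⟩, ?_⟩
      rintro q ⟨hq, hqpref⟩
      rcases (hmemT2 q).mp hq with rfl | ⟨hqT, hq0, hq1⟩
      · exfalso
        obtain ⟨b, hb⟩ := isPref_snoc_of_isPref hqpref
        have hmemb : (u ++ [b], v ++ [b]) ∈ T := by cases b <;> [exact h0; exact h1]
        have heq1 := hpu (u ++ [b], v ++ [b]) ⟨hmemb, hb⟩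
        cases b
        · exact hcase.1 heq1.symm
        · exact hcase.2 heq1.symm
      · exact hpu q ⟨hqT, hqpref⟩
  have hcard2 : T2.card < N := by
    rw [hT2]
    have h1' : (u ++ [true], v ++ [true]) ∈ T.erase (u ++ [false], v ++ [false]) :=
      Finset.mem_erase.mpr ⟨Ne.symm hne, h1⟩
    rw [Finset.card_insert_of_notMem (by
      simp only [Finset.mem_erase]
      intro hcontra
      exact huvnot hcontra.2.2)]
    rw [Finset.card_erase_of_mem h1', Finset.card_erase_of_mem h0, hN]
    have : 2 ≤ N := by
      rw [← hN]
      exact Finset.one_lt_card.mpr ⟨_, h0, _, h1, hne⟩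
    omega
  obtain ⟨T', hT', hr', hc'⟩ := ih T2.card hcard2 ⟨hdom2, hrng2, heval2⟩ rfl
  exact ⟨T', hT', hr', by omega⟩

/-- Every member of a finite complete prefix code is shorter than the
cardinality of the code. -/
lemma code_length_lt_card {C : Finset (List Bool)}
    (hC : ∀ τ : CSeq, ∃! c, c ∈ C ∧ IsPref c τ) {c : List Bool} (hc : c ∈ C) :
    c.length < C.card := by
  classical
  set ω : ℕ → CSeq := fun i => fun n =>
    if n < i then c.getD n false else if n = i then !(c.getD n false) else false with hω
  set F : ℕ → List Bool := fun i => (hC (ω i)).choose with hF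
  have hFspec : ∀ i, F i ∈ C ∧ IsPref (F i) (ω i) := fun i => (hC (ω i)).choose_spec.1
  have hcpref : IsPref c (ω c.length) := by
    rw [isPref_iff]
    intro i hi
    rw [hω]
    simp only [if_pos hi]
    rw [List.getD_eq_getElem _ _ hi]
  have hFc : F c.length = c := by
    obtain ⟨x, -, hu⟩ := hC (ω c.length)
    exact (hu _ (hFspec c.length)).trans (hu c ⟨hc, hcpref⟩).symm
  have hinj : ∀ i ≤ c.length, ∀ j ≤ c.length, i < j → F i ≠ F j := by
    intro i hi j hj hij hcontra
    have hFi := hFspec i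
    have hFj := hFspec j
    rw [hcontra] at hFi
    -- F j covers both ω i and ω j
    have hlen : (F j).length ≤ i := by
      by_contra hlt
      push_neg at hlt
      have e1 : ω i i = (F j)[i]'(by omega) := (isPref_iff.mp hFi.2) i (by omega)
      have e2 : ω j i = (F j)[i]'(by omega) := (isPref_iff.mp hFj.2) i (by omega)
      rw [hω] at e1 e2
      simp only [lt_irrefl, if_neg (lt_irrefl i), if_pos rfl, if_pos hij] at e1 e2
      rw [← e2] at e1
      simp at e1
    -- then F j is a prefix of c, contradiction with uniqueness at ω c.length
    have hpref : IsPref (F j) (ω c.length) := by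
      rw [isPref_iff]
      intro n hn
      have e1 : ω i n = (F j)[n] := (isPref_iff.mp hFi.2) n hn
      rw [hω] at e1 ⊢
      simp only [if_pos (by omega : n < i)] at e1
      simp only [if_pos (by omega : n < c.length)]
      exact e1
    have : F j = c := by
      obtain ⟨x, -, hu⟩ := hC (ω c.length)
      exact (hu _ ⟨hFj.1, hpref⟩).trans (hu c ⟨hc, hcpref⟩).symm
    rw [this] at hlen
    omega
  have : (Finset.range (c.length + 1)).card ≤ C.card := by
    apply Finset.card_le_card_of_injOn F
    · intro i hi
      exact (hFspec i).1
    · intro i hi j hj hFij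
      simp only [Finset.mem_coe, Finset.mem_range] at hi hj
      rcases Nat.lt_trichotomy i j with h | h | h
      · exact absurd hFij (hinj i (by omega) j (by omega) h)
      · exact h
      · exact absurd hFij.symm (hinj j (by omega) i (by omega) h)
  simpa using this

end Reduction
section Xm

lemma isPref_singleton_iff {b : Bool} {ω : CSeq} : IsPref [b] ω ↔ ω 0 = b := by
  rw [isPref_iff]
  constructor
  · intro h; exact h 0 (by simp)
  · intro h i hi
    have : i = 0 := by simpa using hi
    subst this
    simpa using h

lemma not_isPref_replicate_true {j : ℕ} {ω : CSeq} :
    ¬ IsPref (List.replicate j true) ω ↔ ∃ i < j, ω i = false := by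
  rw [isPref_replicate]
  push_neg
  simp

lemma app_two (b c : Bool) (τ : CSeq) : app [b, c] τ = app [b] (app [c] τ) := by
  rw [show [b, c] = [b] ++ [c] from rfl, app_append]

lemma rep_succ_app (j : ℕ) (b : Bool) (ω : CSeq) :
    app (List.replicate (j + 1) b) ω = app [b] (app (List.replicate j b) ω) := by
  rw [show List.replicate (j+1) b = [b] ++ List.replicate j b from rfl, app_append]

lemma cseq_split2 (ω : CSeq) :
    (∃ τ, ω = app [false, false] τ) ∨ (∃ τ, ω = app [false, true] τ) ∨
    (∃ τ, ω = app [true] τ) := by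
  have h0 := cseq_head ω
  have h1 := cseq_head (fun n => ω (n + 1))
  cases hb : ω 0
  · rw [hb] at h0
    cases hb1 : ω 1
    · refine Or.inl ⟨fun n => ω (n + 2), ?_⟩
      rw [app_two, h0]
      congr 1
      rw [h1]
      simp only [hb1]
      rfl
    · refine Or.inr (Or.inl ⟨fun n => ω (n + 2), ?_⟩)
      rw [app_two, h0]
      congr 1
      rw [h1]
      simp only [hb1]
      rfl
  · exact Or.inr (Or.inr ⟨fun n => ω (n + 1), by rw [hb] at h0; exact h0⟩)

lemma cseq_split2' (ω : CSeq) :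
    (∃ τ, ω = app [false] τ) ∨ (∃ τ, ω = app [true, false] τ) ∨
    (∃ τ, ω = app [true, true] τ) := by
  have h0 := cseq_head ω
  have h1 := cseq_head (fun n => ω (n + 1))
  cases hb : ω 0
  · exact Or.inl ⟨fun n => ω (n + 1), by rw [hb] at h0; exact h0⟩
  · rw [hb] at h0
    cases hb1 : ω 1
    · refine Or.inr (Or.inl ⟨fun n => ω (n + 2), ?_⟩)
      rw [app_two, h0]
      congr 1
      rw [h1]
      simp only [hb1]
      rfl
    · refine Or.inr (Or.inr ⟨fun n => ω (n + 2), ?_⟩)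
      rw [app_two, h0]
      congr 1
      rw [h1]
      simp only [hb1]
      rfl

lemma x0_00 {x0 : VPerm} (hx0 : Represents x0 x0T) (ω : CSeq) :
    x0 (app [false, false] ω) = app [false] ω :=
  hx0.2.2 ([false, false], [false]) (by simp [x0T]) ω

lemma x0_01 {x0 : VPerm} (hx0 : Represents x0 x0T) (ω : CSeq) :
    x0 (app [false, true] ω) = app [true, false] ω :=
  hx0.2.2 ([false, true], [true, false]) (by simp [x0T]) ω

lemma x0_1 {x0 : VPerm} (hx0 : Represents x0 x0T) (ω : CSeq) :
    x0 (app [true] ω) = app [true, true] ω :=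
  hx0.2.2 ([true], [true, true]) (by simp [x0T]) ω

lemma x1_0 {x1 : VPerm} (hx1 : Represents x1 x1T) (ω : CSeq) :
    x1 (app [false] ω) = app [false] ω :=
  hx1.2.2 ([false], [false]) (by simp [x1T]) ω

lemma x1_copy {x0 x1 : VPerm} (hx0 : Represents x0 x0T) (hx1 : Represents x1 x1T)
    (ω : CSeq) : x1 (app [true] ω) = app [true] (x0 ω) := by
  rcases cseq_split2 ω with ⟨τ, rfl⟩ | ⟨τ, rfl⟩ | ⟨τ, rfl⟩
  · rw [x0_00 hx0]
    have := hx1.2.2 ([true, false, false], [true, false]) (by simp [x1T]) τ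
    rw [← app_append, ← app_append]
    simpa using this
  · rw [x0_01 hx0]
    have := hx1.2.2 ([true, false, true], [true, true, false]) (by simp [x1T]) τ
    rw [← app_append, ← app_append]
    simpa using this
  · rw [x0_1 hx0]
    have := hx1.2.2 ([true, true], [true, true, true]) (by simp [x1T]) τ
    rw [← app_append, ← app_append]
    simpa using this

lemma x0_rep {x0 : VPerm} (hx0 : Represents x0 x0T) (σ : CSeq) (j : ℕ) :
    x0 (app (List.replicate (j + 1) true) σ) = app (List.replicate (j + 2) true) σ := by
  rw [rep_succ_app j, x0_1 hx0, rep_succ_app (j+1), rep_succ_app j, ← app_two]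

/-- `x_{r+1}` is the copy of `x0` supported on the cylinder `1^{r+1}`. -/
lemma xseq_copy {x0 x1 : VPerm} (hx0 : Represents x0 x0T) (hx1 : Represents x1 x1T)
    (r : ℕ) :
    (∀ ω, xseq x0 x1 (r + 1) (app (List.replicate (r + 1) true) ω)
        = app (List.replicate (r + 1) true) (x0 ω)) ∧
    (∀ ω, ¬ IsPref (List.replicate (r + 1) true) ω → xseq x0 x1 (r + 1) ω = ω) := by
  induction r with
  | zero =>
    have hx : xseq x0 x1 1 = x1 := by
      show x0 ^ 0 * x1 * (x0⁻¹) ^ 0 = x1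
      group
    rw [hx]
    constructor
    · intro ω
      simpa using x1_copy hx0 hx1 ω
    · intro ω hnp
      rw [not_isPref_replicate_true] at hnp
      obtain ⟨i, hi, hfalse⟩ := hnp
      have hi0 : i = 0 := by omega
      subst hi0
      have hsplit := cseq_head ω
      rw [hfalse] at hsplit
      rw [hsplit, x1_0 hx1]
  | succ r ih =>
    have hstep : xseq x0 x1 (r + 2) = x0 * xseq x0 x1 (r + 1) * x0⁻¹ := by
      show x0 ^ (r+1) * x1 * (x0⁻¹) ^ (r+1) = x0 * (x0 ^ r * x1 * (x0⁻¹) ^ r) * x0⁻¹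
      rw [pow_succ', pow_succ]
      group
    constructor
    · intro ω
      rw [hstep]
      simp only [Equiv.Perm.mul_apply]
      have h1 : x0⁻¹ (app (List.replicate (r + 2) true) ω)
          = app (List.replicate (r + 1) true) ω := by
        rw [← x0_rep hx0 ω r]
        simp
      rw [h1, ih.1 ω, x0_rep hx0 (x0 ω) r]
    · intro ω hnp
      rw [not_isPref_replicate_true] at hnp
      obtain ⟨i, hi, hfalse⟩ := hnp
      rw [hstep]
      simp only [Equiv.Perm.mul_apply]
      rcases cseq_split2' ω with ⟨τ, rfl⟩ | ⟨τ, rfl⟩ | ⟨τ, rfl⟩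
      · have h1 : x0⁻¹ (app [false] τ) = app [false, false] τ := by
          rw [← x0_00 hx0 τ]
          simp
        rw [h1, ih.2 _ (by
          rw [not_isPref_replicate_true]
          exact ⟨0, by omega, by rw [app_apply_lt _ _ (by simp)]; rfl⟩)]
        exact x0_00 hx0 τ
      · have h1 : x0⁻¹ (app [true, false] τ) = app [false, true] τ := by
          rw [← x0_01 hx0 τ]
          simp
        rw [h1, ih.2 _ (by
          rw [not_isPref_replicate_true]
          exact ⟨0, by omega, by rw [app_apply_lt _ _ (by simp)]; rfl⟩)]
        exact x0_01 hx0 τ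
      · have h1 : x0⁻¹ (app [true, true] τ) = app [true] τ := by
          rw [← x0_1 hx0 τ]
          simp
        have hi2 : 2 ≤ i := by
          by_contra hlt
          push_neg at hlt
          rw [app_apply_lt _ _ (by simpa using hlt)] at hfalse
          interval_cases i <;> simp at hfalse
        have hτ : τ (i - 2) = false := by
          rw [app_apply_ge _ _ (by simpa using hi2)] at hfalse
          simpa using hfalse
        rw [h1, ih.2 _ (by
          rw [not_isPref_replicate_true]
          refine ⟨i - 1, by omega, ?_⟩
          rw [app_apply_ge _ _ (by simp; omega)]
          simpa [show i - 1 - 1 = i - 2 by omega] using hτ)]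
        exact x0_1 hx0 τ

end Xm
section Helpers

lemma app_nil (ω : CSeq) : app [] ω = ω := by
  funext n
  rw [app_apply_ge _ _ (by simp)]
  simp

lemma isPref_nil (ω : CSeq) : IsPref [] ω := ⟨ω, (app_nil ω).symm⟩

/-- `1^e` as a list. -/
def Rt (e : ℕ) : List Bool := List.replicate e true

lemma Rt_eq (e : ℕ) : Rt e = List.replicate e true := rfl

lemma Rt_length (e : ℕ) : (Rt e).length = e := by simp [Rt_eq]

lemma Rt_add (a b : ℕ) : Rt (a + b) = Rt a ++ Rt b := by
  rw [Rt_eq, Rt_eq, Rt_eq, List.replicate_add]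

lemma isPref_append_iff' {u v : List Bool} {τ : CSeq} :
    IsPref (u ++ v) τ ↔ IsPref u τ ∧ IsPref v (fun n => τ (n + u.length)) := by
  constructor
  · rintro ⟨σ, rfl⟩
    rw [app_append]
    refine ⟨isPref_app_self _ _, ?_⟩
    have : (fun n => app u (app v σ) (n + u.length)) = app v σ := by
      funext n
      rw [app_apply_ge _ _ (by omega)]
      congr 1
      omega
    rw [this]
    exact isPref_app_self _ _
  · rintro ⟨⟨σ, rfl⟩, h2⟩
    have hshift : (fun n => app u σ (n + u.length)) = σ := by
      funext n
      rw [app_apply_ge _ _ (by omega)]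
      congr 1
      omega
    rw [hshift] at h2
    obtain ⟨ρ, rfl⟩ := h2
    exact ⟨ρ, by rw [app_append]⟩

lemma isPref_single_iff {b : Bool} {ω : CSeq} : IsPref [b] ω ↔ ω 0 = b :=
  isPref_singleton_iff

lemma isPref_pair_iff' {b c : Bool} {ω : CSeq} :
    IsPref [b, c] ω ↔ ω 0 = b ∧ ω 1 = c := by
  rw [show [b, c] = [b] ++ [c] from rfl, isPref_append_iff', isPref_singleton_iff,
    isPref_singleton_iff]
  simp

lemma isPref_repfalse_iff {e : ℕ} {τ : CSeq} :
    IsPref (Rt e ++ [false]) τ ↔ (∀ i < e, τ i = true) ∧ τ e = false := by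
  rw [Rt_eq, isPref_append_iff', isPref_replicate, isPref_singleton_iff]
  simp

lemma isPref_repfb_iff {d : ℕ} {b : Bool} {τ : CSeq} :
    IsPref (Rt d ++ [false, b]) τ ↔
      (∀ i < d, τ i = true) ∧ τ d = false ∧ τ (d + 1) = b := by
  rw [Rt_eq, isPref_append_iff', isPref_replicate, isPref_pair_iff']
  simp only [List.length_replicate, Nat.zero_add, Nat.add_comm 1 d]

lemma isPref_Rt_iff {j : ℕ} {τ : CSeq} : IsPref (Rt j) τ ↔ ∀ i < j, τ i = true := by
  rw [Rt_eq]; exact isPref_replicate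

lemma split3 (τ : CSeq) (d : ℕ) :
    (∃ e < d, (∀ i < e, τ i = true) ∧ τ e = false) ∨ (∀ i < d, τ i = true) := by
  by_cases h : ∀ i < d, τ i = true
  · exact Or.inr h
  · push_neg at h
    obtain ⟨i, hi, hne⟩ := h
    have hfi : τ i = false := by simpa using hne
    have hex : ∃ j, τ j = false := ⟨i, hfi⟩
    refine Or.inl ⟨Nat.find hex, by
        have := Nat.find_min' hex hfi
        omega,
      fun j hj => by
        have := Nat.find_min hex hj
        simpa using this,
      Nat.find_spec hex⟩

lemma repf_excl {τ : CSeq} {e e' : ℕ}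
    (h : (∀ i < e, τ i = true) ∧ τ e = false)
    (h' : (∀ i < e', τ i = true) ∧ τ e' = false) : e = e' := by
  rcases Nat.lt_trichotomy e e' with hl | hl | hl
  · have := h'.1 e hl
    rw [h.2] at this
    simp at this
  · exact hl
  · have := h.1 e' hl
    rw [h'.2] at this
    simp at this

lemma repf_not_all {τ : CSeq} {e j : ℕ}
    (h : τ e = false) (hall : ∀ i < j, τ i = true) (hej : e < j) : False := by
  have := hall e hej
  rw [h] at this
  simp at this

/-- The branch table of the copy of `x0` occurring at depth `d` below the
all-ones branch. -/
def bc3 (d : ℕ) : Finset (List Bool × List Bool) :=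
  (Finset.range d).image (fun e => (Rt e ++ [false], Rt e ++ [false])) ∪
  {(Rt d ++ [false, false], Rt d ++ [false]),
   (Rt d ++ [false, true], Rt (d + 1) ++ [false]),
   (Rt (d + 1), Rt (d + 2))}

lemma mem_bc3 {d : ℕ} {q : List Bool × List Bool} :
    q ∈ bc3 d ↔ (∃ e < d, q = (Rt e ++ [false], Rt e ++ [false])) ∨
      q = (Rt d ++ [false, false], Rt d ++ [false]) ∨
      q = (Rt d ++ [false, true], Rt (d + 1) ++ [false]) ∨
      q = (Rt (d + 1), Rt (d + 2)) := by
  simp only [bc3, Finset.mem_union, Finset.mem_image, Finset.mem_range,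
    Finset.mem_insert, Finset.mem_singleton]
  constructor
  · rintro (⟨e, he, rfl⟩ | h | h | h)
    · exact Or.inl ⟨e, he, rfl⟩
    · exact Or.inr (Or.inl h)
    · exact Or.inr (Or.inr (Or.inl h))
    · exact Or.inr (Or.inr (Or.inr h))
  · rintro (⟨e, he, rfl⟩ | h | h | h)
    · exact Or.inl ⟨e, he, rfl⟩
    · exact Or.inr (Or.inl h)
    · exact Or.inr (Or.inr (Or.inl h))
    · exact Or.inr (Or.inr (Or.inr h))

lemma bc3_dom_code (d : ℕ) (τ : CSeq) : ∃! q, q ∈ bc3 d ∧ IsPref q.1 τ := by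
  rcases split3 τ (d + 1) with ⟨e, he, h1, h2⟩ | hall
  · rcases Nat.lt_or_ge e d with hed | hed
    · refine ⟨(Rt e ++ [false], Rt e ++ [false]),
        ⟨mem_bc3.mpr (Or.inl ⟨e, hed, rfl⟩), isPref_repfalse_iff.mpr ⟨h1, h2⟩⟩, ?_⟩
      rintro q ⟨hq, hqp⟩
      rcases mem_bc3.mp hq with ⟨e', he', rfl⟩ | rfl | rfl | rfl
      · simp only at hqp
        rw [isPref_repfalse_iff] at hqp
        rw [repf_excl hqp ⟨h1, h2⟩]
      · rw [show (Rt d ++ [false, false], Rt d ++ [false]).1 = Rt d ++ [false, false]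
          from rfl, isPref_repfb_iff] at hqp
        exact (repf_not_all h2 hqp.1 hed).elim
      · rw [show (Rt d ++ [false, true], Rt (d+1) ++ [false]).1 = Rt d ++ [false, true]
          from rfl, isPref_repfb_iff] at hqp
        exact (repf_not_all h2 hqp.1 hed).elim
      · rw [show (Rt (d+1), Rt (d+2)).1 = Rt (d+1) from rfl, isPref_Rt_iff] at hqp
        exact (repf_not_all h2 hqp (by omega)).elim
    · have hed' : e = d := by omega
      subst hed'
      cases hb : τ (e + 1)
      · refine ⟨(Rt e ++ [false, false], Rt e ++ [false]),
          ⟨mem_bc3.mpr (Or.inr (Or.inl rfl)), isPref_repfb_iff.mpr ⟨h1, h2, hb⟩⟩, ?_⟩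
        rintro q ⟨hq, hqp⟩
        rcases mem_bc3.mp hq with ⟨e', he', rfl⟩ | rfl | rfl | rfl
        · simp only at hqp
          rw [isPref_repfalse_iff] at hqp
          exact (repf_not_all hqp.2 h1 he').elim
        · rfl
        · rw [show (Rt e ++ [false, true], Rt (e+1) ++ [false]).1 = Rt e ++ [false, true]
            from rfl, isPref_repfb_iff] at hqp
          rw [hqp.2.2] at hb
          simp at hb
        · rw [show (Rt (e+1), Rt (e+2)).1 = Rt (e+1) from rfl, isPref_Rt_iff] at hqp
          exact (repf_not_all h2 hqp (by omega)).elim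
      · refine ⟨(Rt e ++ [false, true], Rt (e + 1) ++ [false]),
          ⟨mem_bc3.mpr (Or.inr (Or.inr (Or.inl rfl))), isPref_repfb_iff.mpr ⟨h1, h2, hb⟩⟩, ?_⟩
        rintro q ⟨hq, hqp⟩
        rcases mem_bc3.mp hq with ⟨e', he', rfl⟩ | rfl | rfl | rfl
        · simp only at hqp
          rw [isPref_repfalse_iff] at hqp
          exact (repf_not_all hqp.2 h1 he').elim
        · rw [show (Rt e ++ [false, false], Rt e ++ [false]).1 = Rt e ++ [false, false]
            from rfl, isPref_repfb_iff] at hqp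
          rw [hqp.2.2] at hb
          simp at hb
        · rfl
        · rw [show (Rt (e+1), Rt (e+2)).1 = Rt (e+1) from rfl, isPref_Rt_iff] at hqp
          exact (repf_not_all h2 hqp (by omega)).elim
  · refine ⟨(Rt (d + 1), Rt (d + 2)),
      ⟨mem_bc3.mpr (Or.inr (Or.inr (Or.inr rfl))), isPref_Rt_iff.mpr hall⟩, ?_⟩
    rintro q ⟨hq, hqp⟩
    rcases mem_bc3.mp hq with ⟨e', he', rfl⟩ | rfl | rfl | rfl
    · simp only at hqp
      rw [isPref_repfalse_iff] at hqp
      exact (repf_not_all hqp.2 hall (by omega)).elim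
    · rw [show (Rt d ++ [false, false], Rt d ++ [false]).1 = Rt d ++ [false, false]
        from rfl, isPref_repfb_iff] at hqp
      exact (repf_not_all hqp.2.1 hall (by omega)).elim
    · rw [show (Rt d ++ [false, true], Rt (d+1) ++ [false]).1 = Rt d ++ [false, true]
        from rfl, isPref_repfb_iff] at hqp
      exact (repf_not_all hqp.2.1 hall (by omega)).elim
    · rfl

lemma bc3_rng_code (d : ℕ) (τ : CSeq) : ∃! q, q ∈ bc3 d ∧ IsPref q.2 τ := by
  rcases split3 τ (d + 2) with ⟨e, he, h1, h2⟩ | hall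
  · -- the least false position is e < d + 2
    have hcover : ∃ q0, q0 ∈ bc3 d ∧ q0.2 = Rt e ++ [false] := by
      rcases Nat.lt_or_ge e d with hed | hed
      · exact ⟨(Rt e ++ [false], Rt e ++ [false]), mem_bc3.mpr (Or.inl ⟨e, hed, rfl⟩), rfl⟩
      · rcases Nat.lt_or_ge e (d + 1) with hed1 | hed1
        · have : e = d := by omega
          subst this
          exact ⟨(Rt e ++ [false, false], Rt e ++ [false]),
            mem_bc3.mpr (Or.inr (Or.inl rfl)), rfl⟩
        · have : e = d + 1 := by omega
          subst this
          exact ⟨(Rt d ++ [false, true], Rt (d + 1) ++ [false]),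
            mem_bc3.mpr (Or.inr (Or.inr (Or.inl rfl))), rfl⟩
    obtain ⟨q0, hq0, hq0rng⟩ := hcover
    refine ⟨q0, ⟨hq0, by rw [hq0rng]; exact isPref_repfalse_iff.mpr ⟨h1, h2⟩⟩, ?_⟩
    rintro q ⟨hq, hqp⟩
    -- every bc3 range is of the form Rt e' ++ [false] (e' < d + 2) or Rt (d+2)
    have hqform : (∃ e' < d + 2, q.2 = Rt e' ++ [false]) ∨ q.2 = Rt (d + 2) := by
      rcases mem_bc3.mp hq with ⟨e', he', rfl⟩ | rfl | rfl | rfl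
      · exact Or.inl ⟨e', by omega, rfl⟩
      · exact Or.inl ⟨d, by omega, rfl⟩
      · exact Or.inl ⟨d + 1, by omega, rfl⟩
      · exact Or.inr rfl
    have hq2 : q.2 = Rt e ++ [false] := by
      rcases hqform with ⟨e', he', hq2⟩ | hq2
      · rw [hq2] at hqp
        rw [isPref_repfalse_iff] at hqp
        rw [hq2, repf_excl hqp ⟨h1, h2⟩]
      · rw [hq2] at hqp
        rw [isPref_Rt_iff] at hqp
        exact (repf_not_all h2 hqp he).elim
    -- snd determines the element of bc3
    rw [← hq0rng] at hq2
    rcases mem_bc3.mp hq with ⟨e', he', rfl⟩ | rfl | rfl | rfl <;>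
      rcases mem_bc3.mp hq0 with ⟨e0, he0, rfl⟩ | rfl | rfl | rfl <;>
      simp only [Prod.mk.injEq] at hq2 ⊢ <;>
      first
      | rfl
      | (exfalso
         have := congrArg List.length hq2
         simp [Rt_eq] at this
         all_goals omega)
      | (have : e' = e0 := by
           have := congrArg List.length hq2
           simpa [Rt_eq] using this
         subst this
         exact ⟨rfl, rfl⟩)
      | (exfalso
         have h5 : (false : Bool) ∈ (Rt (d + 1) ++ [false]) := by simp
         first
         | (rw [hq2] at h5; simp [Rt_eq, List.mem_replicate] at h5)
         | (rw [← hq2] at h5; simp [Rt_eq, List.mem_replicate] at h5))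
  · refine ⟨(Rt (d + 1), Rt (d + 2)),
      ⟨mem_bc3.mpr (Or.inr (Or.inr (Or.inr rfl))), isPref_Rt_iff.mpr hall⟩, ?_⟩
    rintro q ⟨hq, hqp⟩
    rcases mem_bc3.mp hq with ⟨e', he', rfl⟩ | rfl | rfl | rfl
    · simp only at hqp
      rw [isPref_repfalse_iff] at hqp
      exact (repf_not_all hqp.2 hall (by omega)).elim
    · rw [show (Rt d ++ [false, false], Rt d ++ [false]).2 = Rt d ++ [false]
        from rfl, isPref_repfalse_iff] at hqp
      exact (repf_not_all hqp.2 hall (by omega)).elim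
    · rw [show (Rt d ++ [false, true], Rt (d+1) ++ [false]).2 = Rt (d+1) ++ [false]
        from rfl, isPref_repfalse_iff] at hqp
      exact (repf_not_all hqp.2 hall (by omega)).elim
    · rfl

lemma lex_irrefl (l : List Bool) : ¬ List.Lex (· < ·) l l := by
  induction l with
  | nil => intro hcontra; cases hcontra
  | cons b l ih =>
    intro hcontra
    cases hcontra with
    | cons hx => exact ih hx
    | rel hx => simp at hx

lemma lex_rep_false {a : ℕ} : ∀ {y : List Bool},
    List.Lex (· < ·) y (List.replicate a false) → y <+: List.replicate a false := by
  induction a with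
  | zero =>
    intro y hy
    cases hy
  | succ a ih =>
    intro y hy
    rw [List.replicate_succ] at hy ⊢
    cases hy with
    | nil => exact List.nil_prefix
    | cons hx => exact List.cons_prefix_cons.mpr ⟨rfl, ih hx⟩
    | rel hx => exact absurd hx (by simp)

lemma mod_cancel {n k j : ℕ} (hk : k < n) (hj : j < n) :
    (k + (j + (n - k)) % n) % n = j := by
  rw [Nat.add_mod_mod, show k + (j + (n - k)) = j + n by omega,
    Nat.add_mod_right, Nat.mod_eq_of_lt hj]

lemma mod_cancel2 {n k i : ℕ} (hk : k < n) (hi : i < n) :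
    ((k + i) % n + (n - k)) % n = i := by
  rw [Nat.mod_add_mod, show k + i + (n - k) = i + n by omega,
    Nat.add_mod_right, Nat.mod_eq_of_lt hi]

end Helpers

section MoreHelpers

lemma app_RtRt (a b : ℕ) (ω : CSeq) :
    app (Rt (a + b)) ω = app (Rt a) (app (Rt b) ω) := by
  rw [Rt_add, app_append]

lemma app_repfalse_at (e : ℕ) (ω : CSeq) : app (Rt e ++ [false]) ω e = false :=
  (isPref_repfalse_iff.mp (isPref_app_self (Rt e ++ [false]) ω)).2

lemma mod_cancel3 {n c x y : ℕ} (hc : c ≤ n) (hx : x < n) (hy : y < n)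
    (h : (x + c) % n = (y + c) % n) : x = y := by
  have e1 : ((x + c) % n + (n - c)) % n = x := by
    rw [Nat.mod_add_mod, show x + c + (n - c) = x + n by omega,
      Nat.add_mod_right, Nat.mod_eq_of_lt hx]
  have e2 : ((y + c) % n + (n - c)) % n = y := by
    rw [Nat.mod_add_mod, show y + c + (n - c) = y + n by omega,
      Nat.add_mod_right, Nat.mod_eq_of_lt hy]
  rw [h, e2] at e1
  exact e1.symm

end MoreHelpers
/-- Let `g1 ∈ V` with `N(g1) ≥ 4` such that `0` is a strict
prefix of the range code of some branch of `g1`.  List the domain codes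
`us` and the range codes `ts` of the reduced representation of `g1` in
(strict) lexicographic order, and let `k` (0-indexed) be such that
`us[0] → ts[k]` is a branch of `g1`.  Let `h` be the element of `T` with
branches `ts[(k+i) mod n] → us[i]`, `i = 0, …, n−1` (this condition pins down
`h` as a permutation of the Cantor set).  Let `M ≥ 1`, `m = 1 + M·N(g1)`,
`g2 = g1·x_m` and `g3 = g2·h` (left-to-right products).  Then:
(1) for every `C ≥ 1` with `|t|_B ≤ C·N(t)` for all `t ∈ T`, one has
`|h|_B ≤ C·N(g1)`; (2) `N(g3) ≥ (M−1)·N(g1)`; (3) `ℓ0(g3) ≤ N(g1)` and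
`0^{ℓ0(g3)} → 0^{ℓ0(g3)}` is a branch of `g3`. -/
theorem stmt12 (x0 x1 c1 : VPerm)
    (hx0 : Represents x0 x0T) (hx1 : Represents x1 x1T)
    (hc1 : Represents c1 c1T)
    (g1 : VPerm) (hg1 : InV g1) (hN : 4 ≤ Nbr g1)
    (hpref : StrictPrefOfBranch g1 [false])
    (us ts : List (List Bool))
    (hlus : us.length = Nbr g1) (hlts : ts.length = Nbr g1)
    (hsus : us.Pairwise (List.Lex (· < ·)))
    (hsts : ts.Pairwise (List.Lex (· < ·)))
    (hmem : ∀ u t : List Bool, IsBranch g1 u t → u ∈ us ∧ t ∈ ts)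
    (k : ℕ) (hk : k < Nbr g1)
    (hfirst : IsBranch g1 (us.getD 0 []) (ts.getD k []))
    (h : VPerm) (hhT : InT h)
    (hh : ∀ i < Nbr g1, ∀ ω : CSeq,
      h (app (ts.getD ((k + i) % Nbr g1) []) ω) = app (us.getD i []) ω)
    (M : ℕ) (hM : 1 ≤ M)
    (g2 g3 : VPerm)
    (hg2 : g2 = g1.trans (xseq x0 x1 (1 + M * Nbr g1)))
    (hg3 : g3 = g2.trans h) :
    (∀ C : ℝ, 1 ≤ C →
      (∀ t : VPerm, InT t → (wlen {x0, x1, c1} t : ℝ) ≤ C * (Nbr t : ℝ)) →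
      (wlen {x0, x1, c1} h : ℝ) ≤ C * (Nbr g1 : ℝ)) ∧
    (M - 1) * Nbr g1 ≤ Nbr g3 ∧
    ell0 g3 ≤ Nbr g1 ∧
    IsBranch g3 (List.replicate (ell0 g3) false) (List.replicate (ell0 g3) false) := by
  classical
  have hS1ne : {N | ∃ T, Represents g1 T ∧ Reduced T ∧ T.card = N}.Nonempty := by
    by_contra hc
    rw [Set.not_nonempty_iff_eq_empty] at hc
    have : Nbr g1 = 0 := by rw [Nbr, hc, Nat.sInf_empty]
    omega
  obtain ⟨T1, hT1, hT1red, hT1card⟩ :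
      ∃ T, Represents g1 T ∧ Reduced T ∧ T.card = Nbr g1 := Nat.sInf_mem hS1ne
  set n := Nbr g1 with hndef
  have hfstinj : ∀ p ∈ T1, ∀ q ∈ T1, p.1 = q.1 → p = q := by
    intro p hp q hq he
    exact dom_prefix_eq hT1 hp hq (he ▸ List.prefix_rfl)
  have hsndinj : ∀ p ∈ T1, ∀ q ∈ T1, p.2 = q.2 → p = q := by
    intro p hp q hq he
    exact rng_prefix_eq hT1 hp hq (he ▸ List.prefix_rfl)
  have husnodup : us.Nodup :=
    hsus.imp (fun hab heq => absurd (heq ▸ hab) (lex_irrefl _))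
  have htsnodup : ts.Nodup :=
    hsts.imp (fun hab heq => absurd (heq ▸ hab) (lex_irrefl _))
  have husfin : T1.image Prod.fst = us.toFinset := by
    apply Finset.eq_of_subset_of_card_le
    · intro x hx
      obtain ⟨p, hp, rfl⟩ := Finset.mem_image.mp hx
      rw [List.mem_toFinset]
      exact (hmem p.1 p.2 ⟨T1, hT1, hT1red, by simpa using hp⟩).1
    · have h1 : us.toFinset.card = n := by
        rw [List.card_toFinset, husnodup.dedup, hlus]
      have h2 : (T1.image Prod.fst).card = n := by
        rw [Finset.card_image_of_injOn (fun p hp q hq => hfstinj p hp q hq), hT1card]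
      omega
  have htsfin : T1.image Prod.snd = ts.toFinset := by
    apply Finset.eq_of_subset_of_card_le
    · intro x hx
      obtain ⟨p, hp, rfl⟩ := Finset.mem_image.mp hx
      rw [List.mem_toFinset]
      exact (hmem p.1 p.2 ⟨T1, hT1, hT1red, by simpa using hp⟩).2
    · have h1 : ts.toFinset.card = n := by
        rw [List.card_toFinset, htsnodup.dedup, hlts]
      have h2 : (T1.image Prod.snd).card = n := by
        rw [Finset.card_image_of_injOn (fun p hp q hq => hsndinj p hp q hq), hT1card]
      omega
  have husmem : ∀ x, x ∈ us ↔ ∃ p ∈ T1, p.1 = x := by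
    intro x
    rw [← List.mem_toFinset, ← husfin, Finset.mem_image]
  have htsmem : ∀ x, x ∈ ts ↔ ∃ p ∈ T1, p.2 = x := by
    intro x
    rw [← List.mem_toFinset, ← htsfin, Finset.mem_image]
  -- getD injectivity from nodup
  have husgetinj : ∀ i < n, ∀ j < n, us.getD i [] = us.getD j [] → i = j := by
    intro i hi j hj he
    rw [List.getD_eq_getElem us [] (by omega), List.getD_eq_getElem us [] (by omega)] at he
    exact (List.Nodup.getElem_inj_iff husnodup).mp he
  have htsgetinj : ∀ i < n, ∀ j < n, ts.getD i [] = ts.getD j [] → i = j := by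
    intro i hi j hj he
    rw [List.getD_eq_getElem ts [] (by omega), List.getD_eq_getElem ts [] (by omega)] at he
    exact (List.Nodup.getElem_inj_iff htsnodup).mp he
  -- the all-zeros domain branch
  obtain ⟨pz, ⟨hpz, hpzpref⟩, -⟩ := hT1.1 (fun _ => false)
  have hpz1 : pz.1 = List.replicate pz.1.length false := by
    apply List.ext_getElem (by simp)
    intro i h1 h2
    rw [List.getElem_replicate]
    exact (isPref_iff.mp hpzpref i h1).symm
  -- the all-ones range branch
  obtain ⟨pm, ⟨hpm, hpmpref⟩, -⟩ := hT1.2.1 (fun _ => true)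
  have hpm2 : pm.2 = Rt pm.2.length := by
    rw [Rt_eq]
    apply List.ext_getElem (by simp)
    intro i h1 h2
    rw [List.getElem_replicate]
    exact (isPref_iff.mp hpmpref i h1).symm
  -- cardinality bounds on code lengths
  have hfstcode : ∀ τ, ∃! c, c ∈ T1.image Prod.fst ∧ IsPref c τ := by
    intro τ
    obtain ⟨p, ⟨hp, hppref⟩, hpu⟩ := hT1.1 τ
    refine ⟨p.1, ⟨Finset.mem_image_of_mem _ hp, hppref⟩, ?_⟩
    rintro c ⟨hc, hcp⟩
    obtain ⟨q, hq, rfl⟩ := Finset.mem_image.mp hc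
    rw [hpu q ⟨hq, hcp⟩]
  have hsndcode : ∀ τ, ∃! c, c ∈ T1.image Prod.snd ∧ IsPref c τ := by
    intro τ
    obtain ⟨p, ⟨hp, hppref⟩, hpu⟩ := hT1.2.1 τ
    refine ⟨p.2, ⟨Finset.mem_image_of_mem _ hp, hppref⟩, ?_⟩
    rintro c ⟨hc, hcp⟩
    obtain ⟨q, hq, rfl⟩ := Finset.mem_image.mp hc
    rw [hpu q ⟨hq, hcp⟩]
  have hdomlen : ∀ p ∈ T1, p.1.length < n := by
    intro p hp
    have := code_length_lt_card hfstcode (Finset.mem_image_of_mem Prod.fst hp)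
    rwa [Finset.card_image_of_injOn (fun p hp q hq => hfstinj p hp q hq), hT1card] at this
  have hrnglen : ∀ p ∈ T1, p.2.length < n := by
    intro p hp
    have := code_length_lt_card hsndcode (Finset.mem_image_of_mem Prod.snd hp)
    rwa [Finset.card_image_of_injOn (fun p hp q hq => hsndinj p hp q hq), hT1card] at this
  have hapos : 1 ≤ pz.1.length := by
    by_contra hc
    push_neg at hc
    have hznil : pz.1 = [] := List.length_eq_zero_iff.mp (by omega)
    obtain ⟨q, hq, hqne⟩ := Finset.exists_mem_ne (by omega : 1 < T1.card) pz
    exact hqne (dom_prefix_eq hT1 hpz hq (by rw [hznil]; exact List.nil_prefix)).symm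
  have hl1pos : 1 ≤ pm.2.length := by
    by_contra hc
    push_neg at hc
    have hznil : pm.2 = [] := List.length_eq_zero_iff.mp (by omega)
    obtain ⟨q, hq, hqne⟩ := Finset.exists_mem_ne (by omega : 1 < T1.card) pm
    exact hqne (rng_prefix_eq hT1 hpm hq (by rw [hznil]; exact List.nil_prefix)).symm
  have hl1lt : pm.2.length < n := hrnglen pm hpm
  have halt : pz.1.length < n := hdomlen pz hpz
  -- identification of us[0]
  obtain ⟨j0, hj0lt, hj0⟩ := List.mem_iff_getElem.mp ((husmem pz.1).mpr ⟨pz, hpz, rfl⟩)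
  have hu0 : us.getD 0 [] = pz.1 := by
    have h0lt : 0 < us.length := by omega
    rw [List.getD_eq_getElem us [] h0lt]
    rcases Nat.eq_zero_or_pos j0 with hj | hj
    · subst hj; exact hj0
    · have hlex : List.Lex (· < ·) us[0] us[j0] :=
        List.pairwise_iff_getElem.mp hsus 0 j0 h0lt hj0lt hj
    
      rw [hj0, hpz1] at hlex
      have hpre : us[0] <+: pz.1 := by
        rw [hpz1]
        exact lex_rep_false hlex
      obtain ⟨q0, hq0, hq0fst⟩ := (husmem us[0]).mp (List.getElem_mem h0lt)
      have heqq := dom_prefix_eq hT1 hq0 hpz (by rw [hq0fst]; exact hpre)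
      rw [← hq0fst, heqq]
  -- index-in-ts facts
  have hexidx : ∀ q, q ∈ ts → ∃ j, j < n ∧ ts.getD j [] = q := by
    intro q hq
    obtain ⟨j, hj, hj2⟩ := List.mem_iff_getElem.mp hq
    refine ⟨j, by omega, ?_⟩
    rw [List.getD_eq_getElem ts [] hj]
    exact hj2
  set tsidx : List Bool → ℕ :=
    fun q => if hq : q ∈ ts then (hexidx q hq).choose else 0 with htsidxdef
  have hidxlt : ∀ q ∈ ts, tsidx q < n := by
    intro q hq
    rw [htsidxdef]
    simp only [dif_pos hq]
    exact (hexidx q hq).choose_spec.1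
  have hidxget : ∀ q ∈ ts, ts.getD (tsidx q) [] = q := by
    intro q hq
    rw [htsidxdef]
    simp only [dif_pos hq]
    exact (hexidx q hq).choose_spec.2
  -- the map φ : range codes → domain codes induced by h
  set φ : List Bool → List Bool :=
    fun q => us.getD ((tsidx q + (n - k)) % n) [] with hφdef
  have hnpos : 0 < n := by omega
  have hφact : ∀ q ∈ ts, ∀ ω, h (app q ω) = app (φ q) ω := by
    intro q hq ω
    have hjlt := hidxlt q hq
    have hilt : (tsidx q + (n - k)) % n < n := Nat.mod_lt _ hnpos
    have hhi := hh _ hilt ω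
    rw [mod_cancel hk hjlt, hidxget q hq] at hhi
    exact hhi
  have hφus : ∀ q ∈ ts, φ q ∈ us := by
    intro q hq
    have hilt : (tsidx q + (n - k)) % n < n := Nat.mod_lt _ hnpos
    rw [hφdef]
    simp only
    rw [List.getD_eq_getElem us [] (by omega)]
    exact List.getElem_mem _
  have hφbranch : ∀ q ∈ ts, ∃ p ∈ T1, p.1 = φ q := fun q hq => (husmem _).mp (hφus q hq)
  have hφinj : ∀ q ∈ ts, ∀ q' ∈ ts, φ q = φ q' → q = q' := by
    intro q hq q' hq' he
    have h1 := hidxlt q hq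
    have h2 := hidxlt q' hq'
    have hi1 : (tsidx q + (n - k)) % n < n := Nat.mod_lt _ hnpos
    have hi2 : (tsidx q' + (n - k)) % n < n := Nat.mod_lt _ hnpos
    have hmodeq : (tsidx q + (n - k)) % n = (tsidx q' + (n - k)) % n :=
      husgetinj _ hi1 _ hi2 he
    have hidx : tsidx q = tsidx q' := mod_cancel3 (by omega) h1 h2 hmodeq
    rw [← hidxget q hq, ← hidxget q' hq', hidx]
  have hkn : k < n := hk
  have hφfirst : φ (ts.getD k []) = us.getD 0 [] := by
    have hkts : ts.getD k [] ∈ ts := by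
      rw [List.getD_eq_getElem ts [] (by omega)]
      exact List.getElem_mem _
    have hidx : tsidx (ts.getD k []) = k :=
      htsgetinj _ (hidxlt _ hkts) _ hkn (hidxget _ hkts)
    rw [hφdef]
    simp only
    rw [hidx, show k + (n - k) = n by omega, Nat.mod_self]
  -- w
  have hpm2ts : pm.2 ∈ ts := (htsmem _).mpr ⟨pm, hpm, rfl⟩
  set w := φ pm.2 with hwdef
  have hwus : ∃ p ∈ T1, p.1 = w := hφbranch pm.2 hpm2ts
  set ℓ1 := pm.2.length with hl1def
  have hφpmact : ∀ ω, h (app (Rt ℓ1) ω) = app w ω := by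
    intro ω
    rw [← hpm2]
    exact hφact pm.2 hpm2ts ω
  -- x_m
  set m := 1 + M * n with hmdef
  have hnle : n ≤ M * n := by
    calc n = 1 * n := (one_mul n).symm
    _ ≤ M * n := Nat.mul_le_mul_right n hM
  have hmrw : m = M * n + 1 := by omega
  have hxmc := xseq_copy hx0 hx1 (M * n)
  rw [← hmrw] at hxmc
  have hxm1 : ∀ ω, xseq x0 x1 m (app (Rt m) ω) = app (Rt m) (x0 ω) := by
    intro ω
    rw [Rt_eq]
    exact hxmc.1 ω
  have hxmfix : ∀ ω, (∃ i < m, ω i = false) → xseq x0 x1 m ω = ω := fun ω hex =>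
    hxmc.2 ω (not_isPref_replicate_true.mpr hex)
  set d := m - ℓ1 with hddef
  have hdm : ℓ1 + d = m := by omega
  have hd2 : 2 ≤ d := by omega
  have hg3eval : ∀ ω, g3 ω = h (xseq x0 x1 m (g1 ω)) := by
    intro ω
    rw [hg3, hg2]
    simp [Equiv.trans_apply]
  -- the representation T3 of g3
  set T3 : Finset (List Bool × List Bool) :=
    ((T1.erase pm).image (fun p => (p.1, φ p.2))) ∪
    ((bc3 d).image (fun q => (pm.1 ++ q.1, w ++ q.2))) with hT3def
  have hBmem : ∀ e < d, (pm.1 ++ (Rt e ++ [false]), w ++ (Rt e ++ [false])) ∈ T3 := by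
    intro e he
    exact Finset.mem_union_right _
      (Finset.mem_image_of_mem _ (mem_bc3.mpr (Or.inl ⟨e, he, rfl⟩)))
  have hc1mem : (pm.1 ++ (Rt d ++ [false, false]), w ++ (Rt d ++ [false])) ∈ T3 :=
    Finset.mem_union_right _
      (Finset.mem_image_of_mem _ (mem_bc3.mpr (Or.inr (Or.inl rfl))))
  -- evaluation clause for T3
  have hT3eval : ∀ p ∈ T3, ∀ ω, g3 (app p.1 ω) = app p.2 ω := by
    intro p hp ω
    rw [hg3eval]
    rcases Finset.mem_union.mp hp with hpA | hpB
    · obtain ⟨p0, hp0e, rfl⟩ := Finset.mem_image.mp hpA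
      have hp0 : p0 ∈ T1 := Finset.mem_of_mem_erase hp0e
      have hp0ne : p0 ≠ pm := (Finset.mem_erase.mp hp0e).1
      simp only
      rw [hT1.2.2 p0 hp0 ω]
      have hnotall : ∃ i < m, (app p0.2 ω) i = false := by
        have hne2 : p0.2 ≠ List.replicate p0.2.length true := by
          intro hcon
          have hallpref : IsPref p0.2 (fun _ => true) := by
            rw [hcon]
            exact isPref_replicate.mpr (fun _ _ => rfl)
          exact hp0ne (rng_unique hT1 hp0 hpm hallpref hpmpref)
        have hexf : ∃ i, ∃ hi : i < p0.2.length, p0.2[i] = false := by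
          by_contra hcon
          push_neg at hcon
          apply hne2
          apply List.ext_getElem (by simp)
          intro i hi1 hi2
          rw [List.getElem_replicate]
          have := hcon i hi1
          simpa using this
        obtain ⟨i, hi, hival⟩ := hexf
        refine ⟨i, by have := hrnglen p0 hp0; omega, ?_⟩
        rw [app_apply_lt _ _ hi]
        exact hival
      rw [hxmfix _ hnotall]
      exact hφact p0.2 ((htsmem _).mpr ⟨p0, hp0, rfl⟩) ω
    · obtain ⟨q, hq, rfl⟩ := Finset.mem_image.mp hpB
      simp only
      have hg1v : g1 (app (pm.1 ++ q.1) ω) = app (Rt ℓ1) (app q.1 ω) := by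
        rw [app_append, hT1.2.2 pm hpm, ← hpm2]
      rcases mem_bc3.mp hq with ⟨e, he, rfl⟩ | rfl | rfl | rfl
      · simp only at hg1v ⊢
        rw [hg1v]
        have hxfix : xseq x0 x1 m (app (Rt ℓ1) (app (Rt e ++ [false]) ω))
            = app (Rt ℓ1) (app (Rt e ++ [false]) ω) := by
          apply hxmfix
          refine ⟨ℓ1 + e, by omega, ?_⟩
          rw [app_apply_ge _ _ (by rw [Rt_length]; omega), Rt_length,
            show ℓ1 + e - ℓ1 = e by omega]
          exact app_repfalse_at e ω
        rw [hxfix, hφpmact, ← app_append]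
      · simp only at hg1v ⊢
        rw [hg1v]
        have e1 : app (Rt ℓ1) (app (Rt d ++ [false, false]) ω)
            = app (Rt m) (app [false, false] ω) := by
          rw [app_append, ← app_RtRt, hdm]
        rw [e1, hxm1, x0_00 hx0]
        have e3 : app (Rt m) (app [false] ω) = app (Rt ℓ1) (app (Rt d ++ [false]) ω) := by
          rw [app_append, ← app_RtRt, hdm]
        rw [e3, hφpmact, ← app_append]
      · simp only at hg1v ⊢
        rw [hg1v]
        have e1 : app (Rt ℓ1) (app (Rt d ++ [false, true]) ω)
            = app (Rt m) (app [false, true] ω) := by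
          rw [app_append, ← app_RtRt, hdm]
        rw [e1, hxm1, x0_01 hx0]
        have e3 : app (Rt m) (app [true, false] ω)
            = app (Rt ℓ1) (app (Rt (d + 1) ++ [false]) ω) := by
          rw [app_two, show app [true] (app [false] ω) = app (Rt 1) (app [false] ω) from rfl,
            ← app_RtRt, app_append, ← app_RtRt, show m + 1 = ℓ1 + (d + 1) by omega]
        rw [e3, hφpmact, ← app_append]
      · simp only at hg1v ⊢
        rw [hg1v]
        have e1 : app (Rt ℓ1) (app (Rt (d + 1)) ω) = app (Rt m) (app (Rt 1) ω) := by
          rw [← app_RtRt, ← app_RtRt, show ℓ1 + (d + 1) = m + 1 by omega]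
        rw [e1, hxm1]
        have e2 : x0 (app (Rt 1) ω) = app (Rt 2) ω := by
          rw [show Rt 1 = [true] from rfl, x0_1 hx0]
          rfl
        rw [e2, ← app_RtRt, show m + 2 = ℓ1 + (d + 2) by omega, app_RtRt, hφpmact,
          ← app_append]
  -- domain completeness for T3
  have hT3dom : ∀ ω, ∃! p, p ∈ T3 ∧ IsPref p.1 ω := by
    intro ω
    obtain ⟨p1, ⟨hp1, hp1pref⟩, hp1u⟩ := hT1.1 ω
    by_cases hcase : p1 = pm
    · subst hcase
      obtain ⟨τ, rfl⟩ := hp1pref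
      obtain ⟨q0, ⟨hq0, hq0pref⟩, hq0u⟩ := bc3_dom_code d τ
      refine ⟨(p1.1 ++ q0.1, w ++ q0.2),
        ⟨Finset.mem_union_right _ (Finset.mem_image_of_mem _ hq0),
          isPref_append_iff.mpr hq0pref⟩, ?_⟩
      rintro q ⟨hqm, hqpref⟩
      rcases Finset.mem_union.mp hqm with hqA | hqB
      · exfalso
        obtain ⟨p0, hp0e, rfl⟩ := Finset.mem_image.mp hqA
        have hp0 : p0 ∈ T1 := Finset.mem_of_mem_erase hp0e
        have := dom_unique hT1 hp0 hp1 hqpref (isPref_app_self _ _)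
        exact (Finset.mem_erase.mp hp0e).1 this
      · obtain ⟨q1, hq1, rfl⟩ := Finset.mem_image.mp hqB
        have hq1pref : IsPref q1.1 τ := isPref_append_iff.mp hqpref
        rw [hq0u q1 ⟨hq1, hq1pref⟩]
    · refine ⟨(p1.1, φ p1.2),
        ⟨Finset.mem_union_left _ (Finset.mem_image_of_mem _
          (Finset.mem_erase.mpr ⟨hcase, hp1⟩)), hp1pref⟩, ?_⟩
      rintro q ⟨hqm, hqpref⟩
      rcases Finset.mem_union.mp hqm with hqA | hqB
      · obtain ⟨p0, hp0e, rfl⟩ := Finset.mem_image.mp hqA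
        have hp0 : p0 ∈ T1 := Finset.mem_of_mem_erase hp0e
        rw [hp1u p0 ⟨hp0, hqpref⟩]
      · exfalso
        obtain ⟨q1, hq1, rfl⟩ := Finset.mem_image.mp hqB
        have hpm1pref : IsPref pm.1 ω :=
          isPref_of_prefix (List.prefix_append _ _) hqpref
        exact hcase (hp1u pm ⟨hpm, hpm1pref⟩).symm
  -- range completeness for T3
  have hT3rng : ∀ ω, ∃! p, p ∈ T3 ∧ IsPref p.2 ω := by
    intro ω
    obtain ⟨p1, ⟨hp1, hp1pref⟩, hp1u⟩ := hT1.1 ω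
    by_cases hcase : p1.1 = w
    · have hwpref : IsPref w ω := hcase ▸ hp1pref
      obtain ⟨τ, rfl⟩ := hwpref
      obtain ⟨q0, ⟨hq0, hq0pref⟩, hq0u⟩ := bc3_rng_code d τ
      refine ⟨(pm.1 ++ q0.1, w ++ q0.2),
        ⟨Finset.mem_union_right _ (Finset.mem_image_of_mem _ hq0),
          isPref_append_iff.mpr hq0pref⟩, ?_⟩
      rintro q ⟨hqm, hqpref⟩
      rcases Finset.mem_union.mp hqm with hqA | hqB
      · exfalso
        obtain ⟨p0, hp0e, rfl⟩ := Finset.mem_image.mp hqA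
        have hp0 : p0 ∈ T1 := Finset.mem_of_mem_erase hp0e
        have hp0ts : p0.2 ∈ ts := (htsmem _).mpr ⟨p0, hp0, rfl⟩
        obtain ⟨q2, hq2, hq2fst⟩ := hφbranch p0.2 hp0ts
        have heq := dom_unique hT1 hq2 hp1 (by rw [hq2fst]; exact hqpref)
          hp1pref
        -- q2 = p1, so φ p0.2 = p1.1 = w = φ pm.2
        have : φ p0.2 = φ pm.2 := by rw [hq2fst.symm.trans (congrArg Prod.fst heq), hcase]
        have := hφinj p0.2 hp0ts pm.2 hpm2ts this
        exact (Finset.mem_erase.mp hp0e).1 (hsndinj p0 hp0 pm hpm this)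
      · obtain ⟨q1, hq1, rfl⟩ := Finset.mem_image.mp hqB
        have hq1pref : IsPref q1.2 τ := isPref_append_iff.mp hqpref
        rw [hq0u q1 ⟨hq1, hq1pref⟩]
    · -- the A-branch whose range is p1.1
      obtain ⟨i0, hi0lt, hi0⟩ := List.mem_iff_getElem.mp ((husmem p1.1).mpr ⟨p1, hp1, rfl⟩)
      have hi0n : i0 < n := by omega
      have hqts : ts.getD ((k + i0) % n) [] ∈ ts := by
        rw [List.getD_eq_getElem ts [] (by rw [hlts]; exact Nat.mod_lt _ hnpos)]
        exact List.getElem_mem _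
      have hφq : φ (ts.getD ((k + i0) % n) []) = p1.1 := by
        have hidx : tsidx (ts.getD ((k + i0) % n) []) = (k + i0) % n :=
          htsgetinj _ (hidxlt _ hqts) _ (Nat.mod_lt _ hnpos) (hidxget _ hqts)
        rw [hφdef]
        simp only
        rw [hidx, mod_cancel2 hk hi0n, List.getD_eq_getElem us [] (by omega), hi0]
      obtain ⟨p2, hp2, hp2snd⟩ := (htsmem _).mp hqts
      have hp2ne : p2 ≠ pm := by
        intro hcon
        apply hcase
        rw [← hφq, ← hp2snd, hcon]
      refine ⟨(p2.1, φ p2.2),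
        ⟨Finset.mem_union_left _ (Finset.mem_image_of_mem _
          (Finset.mem_erase.mpr ⟨hp2ne, hp2⟩)),
          by simp only; rw [hp2snd, hφq]; exact hp1pref⟩, ?_⟩
      rintro q' ⟨hq'm, hq'pref⟩
      rcases Finset.mem_union.mp hq'm with hqA | hqB
      · obtain ⟨p0, hp0e, rfl⟩ := Finset.mem_image.mp hqA
        have hp0 : p0 ∈ T1 := Finset.mem_of_mem_erase hp0e
        have hp0ts : p0.2 ∈ ts := (htsmem _).mpr ⟨p0, hp0, rfl⟩
        obtain ⟨q2, hq2, hq2fst⟩ := hφbranch p0.2 hp0ts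
        have heq := dom_unique hT1 hq2 hp1 (by rw [hq2fst]; exact hq'pref) hp1pref
        have hφeq : φ p0.2 = φ p2.2 := by
          rw [hq2fst.symm.trans (congrArg Prod.fst heq), hp2snd, hφq]
        have := hφinj p0.2 hp0ts p2.2 (by rw [hp2snd]; exact hqts) hφeq
        rw [hsndinj p0 hp0 p2 hp2 this]
      · exfalso
        obtain ⟨q1, hq1, rfl⟩ := Finset.mem_image.mp hqB
        have hwpref : IsPref w ω :=
          isPref_of_prefix (List.prefix_append _ _) hq'pref
        obtain ⟨pw, hpw, hpwfst⟩ := hwus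
        have := dom_unique hT1 hpw hp1 (by rw [hpwfst]; exact hwpref) hp1pref
        exact hcase ((congrArg Prod.fst this).symm.trans hpwfst)
  have hT3rep : Represents g3 T3 := ⟨hT3dom, hT3rng, hT3eval⟩
  -- a reduced representation of g3 of minimal size
  obtain ⟨Talt, hAltrep, hAltred, -⟩ := exists_reduced_rep hT3rep
  have hS3ne : {N | ∃ T, Represents g3 T ∧ Reduced T ∧ T.card = N}.Nonempty :=
    ⟨Talt.card, Talt, hAltrep, hAltred, rfl⟩
  obtain ⟨Tr, hTrrep, hTrred, hTrcard⟩ :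
      ∃ T, Represents g3 T ∧ Reduced T ∧ T.card = Nbr g3 := Nat.sInf_mem hS3ne
  -- every branch of the middle family survives in the reduced representation
  have hspec : ∀ e < d,
      (pm.1 ++ (Rt e ++ [false]), w ++ (Rt e ++ [false])) ∈ Tr := by
    intro e he
    obtain ⟨u, v, s, huv, he1, he2⟩ := refine_branch hTrrep hTrred hT3rep (hBmem e he)
    by_cases hs : s = []
    · subst hs
      simp only [List.append_nil] at he1 he2
      rw [he1, he2]
      exact huv
    · exfalso
      have hul : u.length + s.length = pm.1.length + (e + 1) := by
        have := congrArg List.length he1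
        simp [Rt_length] at this
        omega
      have hvl : v.length + s.length = w.length + (e + 1) := by
        have := congrArg List.length he2
        simp [Rt_length] at this
        omega
      have hslen : 1 ≤ s.length := by
        rcases Nat.eq_zero_or_pos s.length with h0 | h0
        · exact absurd (List.length_eq_zero_iff.mp h0) hs
        · omega
      have hu_pref : u <+: pm.1 ++ (Rt e ++ [false]) := ⟨s, he1.symm⟩
      have hu_pref2 : u <+: pm.1 ++ Rt e := by
        apply List.prefix_of_prefix_length_le hu_pref
        · rw [← List.append_assoc]
          exact List.prefix_append _ _
        · simp [Rt_length]
          omega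
      have hu_pref3 : u <+: pm.1 ++ (Rt d ++ [false, false]) := by
        apply hu_pref2.trans
        have : Rt e <+: Rt d ++ [false, false] :=
          ⟨Rt (d - e) ++ [false, false], by
            rw [← List.append_assoc, ← Rt_add, show e + (d - e) = d by omega]⟩
        obtain ⟨t2, ht2⟩ := this
        exact ⟨t2, by rw [List.append_assoc, ht2]⟩
      obtain ⟨s2, hs2⟩ := hu_pref3
      have htrans := branch_transfer hTrrep hT3rep huv hc1mem hs2.symm
      -- lengths
      have hul2 : u.length + s2.length = pm.1.length + (d + 2) := by
        have := congrArg List.length hs2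
        simp [Rt_length] at this
        omega
      have hvl2 : v.length + s2.length = w.length + (d + 1) := by
        have := congrArg List.length htrans
        simp [Rt_length] at this
        omega
      omega
  have hdleTr : d ≤ Tr.card := by
    have hsub : (Finset.range d).image
        (fun e => (pm.1 ++ (Rt e ++ [false]), w ++ (Rt e ++ [false]))) ⊆ Tr := by
      intro x hx
      obtain ⟨e, he, rfl⟩ := Finset.mem_image.mp hx
      exact hspec e (Finset.mem_range.mp he)
    have hinj : ∀ e ∈ Finset.range d, ∀ e' ∈ Finset.range d,
        (pm.1 ++ (Rt e ++ [false]), w ++ (Rt e ++ [false]))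
          = (pm.1 ++ (Rt e' ++ [false]), w ++ (Rt e' ++ [false])) → e = e' := by
      intro e he e' he' heq
      have := congrArg (fun p => p.1.length) heq
      simp [Rt_length] at this
      omega
    calc d = ((Finset.range d).image
        (fun e => (pm.1 ++ (Rt e ++ [false]), w ++ (Rt e ++ [false])))).card := by
          rw [Finset.card_image_of_injOn hinj, Finset.card_range]
      _ ≤ Tr.card := Finset.card_le_card hsub
  have hpart2 : (M - 1) * n ≤ Nbr g3 := by
    rw [← hTrcard]
    have : (M - 1) * n = M * n - 1 * n := by rw [Nat.sub_mul]
    rw [this, one_mul]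
    omega
  -- Part 3 : the diagonal all-zeros branch
  have hfirstT1 : (us.getD 0 [], ts.getD k []) ∈ T1 := by
    obtain ⟨Tf, hTf, hTfred, hTfmem⟩ := hfirst
    rwa [reduced_rep_unique hTf hTfred hT1 hT1red] at hTfmem
  have hdiag : ∃ b, 1 ≤ b ∧ b ≤ n ∧
      (List.replicate b false, List.replicate b false) ∈ T3 := by
    by_cases hks : (us.getD 0 [], ts.getD k []) = pm
    · -- the first branch of g1 is the all-ones-range branch
      have hpm1 : pm.1 = us.getD 0 [] := (congrArg Prod.fst hks).symm
      have hpmsnd : pm.2 = ts.getD k [] := (congrArg Prod.snd hks).symm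
      have hw0 : w = us.getD 0 [] := by
        rw [hwdef, hpmsnd, hφfirst]
      refine ⟨pz.1.length + 1, by omega, by omega, ?_⟩
      have hmemb := hBmem 0 (by omega)
      have hrw : pm.1 ++ (Rt 0 ++ [false]) = List.replicate (pz.1.length + 1) false := by
        rw [hpm1, hu0, show Rt 0 ++ [false] = [false] from rfl, List.replicate_succ']
        rw [← hpz1]
      have hrw2 : w ++ (Rt 0 ++ [false]) = List.replicate (pz.1.length + 1) false := by
        rw [hw0, hu0, show Rt 0 ++ [false] = [false] from rfl, List.replicate_succ']
        rw [← hpz1]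
      rw [hrw, hrw2] at hmemb
      exact hmemb
    · refine ⟨pz.1.length, hapos, by omega, ?_⟩
      have hmemA : ((us.getD 0 [], ts.getD k []).1, φ (us.getD 0 [], ts.getD k []).2) ∈ T3 :=
        Finset.mem_union_left _ (Finset.mem_image_of_mem _
          (Finset.mem_erase.mpr ⟨hks, hfirstT1⟩))
      simp only at hmemA
      rw [hφfirst, hu0] at hmemA
      rw [← hpz1]
      exact hmemA
  obtain ⟨b, hb1, hbn, hbT3⟩ := hdiag
  obtain ⟨u, v, s, huv, he1, he2⟩ := refine_branch hTrrep hTrred hT3rep hbT3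
  have hul : u.length + s.length = b := by
    have := congrArg List.length he1
    simpa using this.symm
  have hvl : v.length + s.length = b := by
    have := congrArg List.length he2
    simpa using this.symm
  have hueq : u = List.replicate (b - s.length) false := by
    have hupref : u <+: List.replicate b false := ⟨s, he1.symm⟩
    apply List.ext_getElem (by simp; omega)
    intro i hi1 hi2
    rw [List.getElem_replicate]
    exact List.eq_of_mem_replicate (hupref.subset (List.getElem_mem hi1))
  have hveq : v = List.replicate (b - s.length) false := by
    have hvpref : v <+: List.replicate b false := ⟨s, he2.symm⟩
    apply List.ext_getElem (by simp; omega)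
    intro i hi1 hi2
    rw [List.getElem_replicate]
    exact List.eq_of_mem_replicate (hvpref.subset (List.getElem_mem hi1))
  have hl1' : 1 ≤ b - s.length := by
    by_contra hc
    push_neg at hc
    have hu0' : u = [] := by rw [hueq, show b - s.length = 0 by omega]; rfl
    have hv0' : v = [] := by rw [hveq, show b - s.length = 0 by omega]; rfl
    have hnil : ([], []) ∈ Tr := by
      have := huv
      rw [hu0', hv0'] at this
      exact this
    have hB0 := hspec 0 (by omega)
    have := dom_unique hTrrep hnil hB0
      (isPref_nil _) (isPref_app_self _ (fun _ => false))
    have hlen := congrArg (fun p : List Bool × List Bool => p.1.length) this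
    simp [Rt_length] at hlen
  have huvTr : (List.replicate (b - s.length) false, List.replicate (b - s.length) false) ∈ Tr := by
    have := huv
    rw [hueq, hveq] at this
    exact this
  have hmemset : (b - s.length) ∈ {ℓ | 1 ≤ ℓ ∧ ∃ u', IsBranch g3 u' (List.replicate ℓ false)} :=
    ⟨hl1', List.replicate (b - s.length) false, Tr, hTrrep, hTrred, huvTr⟩
  have hell_le : ell0 g3 ≤ b - s.length := Nat.sInf_le hmemset
  have hellmem := Nat.sInf_mem (⟨b - s.length, hmemset⟩ :
    {ℓ | 1 ≤ ℓ ∧ ∃ u', IsBranch g3 u' (List.replicate ℓ false)}.Nonempty)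
  obtain ⟨hell1, u', T'', hT''rep, hT''red, hmem''⟩ := hellmem
  have hTT : T'' = Tr := reduced_rep_unique hT''rep hT''red hTrrep hTrred
  rw [hTT] at hmem''
  have hpair := rng_unique hTrrep hmem'' huvTr
    (isPref_replicate.mpr (fun _ _ => rfl)) (isPref_replicate.mpr (fun _ _ => rfl))
  have hell_eq : ell0 g3 = b - s.length := by
    have := congrArg (fun p : List Bool × List Bool => p.2.length) hpair
    simp at this; exact this
  have hpart3a : ell0 g3 ≤ n := by omega
  have hpart3b : IsBranch g3 (List.replicate (ell0 g3) false)
      (List.replicate (ell0 g3) false) := by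
    rw [hell_eq]
    exact ⟨Tr, hTrrep, hTrred, huvTr⟩
  -- Part 1
  have hpart1 : ∀ C : ℝ, 1 ≤ C →
      (∀ t : VPerm, InT t → (wlen {x0, x1, c1} t : ℝ) ≤ C * (Nbr t : ℝ)) →
      (wlen {x0, x1, c1} h : ℝ) ≤ C * (n : ℝ) := by
    intro C hC hlen
    have hth : Represents h ((Finset.range n).image
        (fun i => (ts.getD ((k + i) % n) [], us.getD i []))) := by
      refine ⟨?_, ?_, ?_⟩
      · intro ω
        obtain ⟨p1, ⟨hp1, hp1pref⟩, hp1u⟩ := hT1.2.1 ω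
        have hp1ts : p1.2 ∈ ts := (htsmem _).mpr ⟨p1, hp1, rfl⟩
        have hjlt := hidxlt _ hp1ts
        have hilt : (tsidx p1.2 + (n - k)) % n < n := Nat.mod_lt _ hnpos
        have hgd : ts.getD ((k + (tsidx p1.2 + (n - k)) % n) % n) [] = p1.2 := by
          rw [mod_cancel hk hjlt]
          exact hidxget _ hp1ts
        refine ⟨(ts.getD ((k + (tsidx p1.2 + (n - k)) % n) % n) [],
            us.getD ((tsidx p1.2 + (n - k)) % n) []),
          ⟨Finset.mem_image_of_mem _ (Finset.mem_range.mpr hilt),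
            by simp only; rw [hgd]; exact hp1pref⟩, ?_⟩
        rintro q ⟨hqm, hqpref⟩
        obtain ⟨i', hi', rfl⟩ := Finset.mem_image.mp hqm
        rw [Finset.mem_range] at hi'
        have hi'lt : (k + i') % n < n := Nat.mod_lt _ hnpos
        have hmem' : ts.getD ((k + i') % n) [] ∈ ts := by
          rw [List.getD_eq_getElem ts [] (by omega)]
          exact List.getElem_mem _
        obtain ⟨p2, hp2, hp2eq⟩ := (htsmem _).mp hmem'
        have heqb := rng_unique hT1 hp2 hp1 (by rw [hp2eq]; exact hqpref) hp1pref
        have heq2 : ts.getD ((k + i') % n) [] =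
            ts.getD ((k + (tsidx p1.2 + (n - k)) % n) % n) [] := by
          rw [hgd, ← hp2eq, heqb]
        have hieq : (k + i') % n = (k + (tsidx p1.2 + (n - k)) % n) % n :=
          htsgetinj _ hi'lt _ (Nat.mod_lt _ hnpos) heq2
        have : i' = (tsidx p1.2 + (n - k)) % n := by
          have e1 := mod_cancel2 hk hi'
          have e2 := mod_cancel2 hk hilt
          rw [hieq, e2] at e1
          exact e1.symm
        rw [this]
      · intro ω
        obtain ⟨p1, ⟨hp1, hp1pref⟩, hp1u⟩ := hT1.1 ω
        obtain ⟨i0, hi0lt, hi0⟩ := List.mem_iff_getElem.mp ((husmem p1.1).mpr ⟨p1, hp1, rfl⟩)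
        have hi0n : i0 < n := by omega
        refine ⟨(ts.getD ((k + i0) % n) [], us.getD i0 []),
          ⟨Finset.mem_image_of_mem _ (Finset.mem_range.mpr hi0n),
            by simp only; rw [List.getD_eq_getElem us [] (by omega), hi0]; exact hp1pref⟩, ?_⟩
        rintro q ⟨hqm, hqpref⟩
        obtain ⟨i', hi', rfl⟩ := Finset.mem_image.mp hqm
        rw [Finset.mem_range] at hi'
        have hmem' : us.getD i' [] ∈ us := by
          rw [List.getD_eq_getElem us [] (by omega)]
          exact List.getElem_mem _
        obtain ⟨p2, hp2, hp2eq⟩ := (husmem _).mp hmem'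
        have heqb := dom_unique hT1 hp2 hp1 (by rw [hp2eq]; exact hqpref) hp1pref
        have : i' = i0 := by
          apply husgetinj _ hi' _ hi0n
          rw [← hp2eq, heqb, List.getD_eq_getElem us [] (by omega), hi0]
        rw [this]
      · intro p hp ω
        obtain ⟨i, hi, rfl⟩ := Finset.mem_image.mp hp
        exact hh i (Finset.mem_range.mp hi) ω
    obtain ⟨Th', hTh'rep, hTh'red, hTh'card⟩ := exists_reduced_rep hth
    have hnbrh : Nbr h ≤ n := by
      have h1 : Nbr h ≤ Th'.card := Nat.sInf_le ⟨Th', hTh'rep, hTh'red, rfl⟩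
      have h2 : ((Finset.range n).image
          (fun i => (ts.getD ((k + i) % n) [], us.getD i []))).card ≤ n :=
        le_trans Finset.card_image_le (by simp)
      omega
    calc (wlen {x0, x1, c1} h : ℝ) ≤ C * (Nbr h : ℝ) := hlen h hhT
      _ ≤ C * (n : ℝ) := by
        apply mul_le_mul_of_nonneg_left _ (by linarith)
        exact_mod_cast hnbrh
  exact ⟨hpart1, hpart2, hpart3a, hpart3b⟩
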